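/- arXiv:1608.06127 — 6 statements merged into one kernel-verified Lean document; each statement's English description precedes it below -/
import Mathlib

section
/- For every nonempty finite simple graph G, the linear altitude of G equals the chromatic number of G: α(G) = χ(G). -/
open SimpleGraph

section Aux

variable {V : Type*} [Fintype V]

open Classical in
/-- Length of the longest monotonic path ending at `v`. -/
noncomputable def lpLen (G : SimpleGraph V) (σ : V ≃ Fin (Fintype.card V)) (v : V) : ℕ :=
  1 + (Finset.univ.filter (fun u => G.Adj u v ∧ σ u < σ v)).attach.sup
      (fun u => lpLen G σ u.1)
termination_by (σ v : ℕ)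
decreasing_by
  · have h := u.2
    simp only [Finset.mem_filter] at h
    exact h.2.2

lemma lpLen_pos (G : SimpleGraph V) (σ : V ≃ Fin (Fintype.card V)) (v : V) :
    1 ≤ lpLen G σ v := by
  rw [lpLen]; exact Nat.le_add_right 1 _

open Classical in
lemma lpLen_lt (G : SimpleGraph V) (σ : V ≃ Fin (Fintype.card V)) {u v : V}
    (hadj : G.Adj u v) (hlt : σ u < σ v) : lpLen G σ u < lpLen G σ v := by
  conv_rhs => rw [lpLen]
  have hu : u ∈ Finset.univ.filter (fun u => G.Adj u v ∧ σ u < σ v) := by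
    simp [hadj, hlt]
  have : lpLen G σ u ≤
      (Finset.univ.filter (fun u => G.Adj u v ∧ σ u < σ v)).attach.sup
        (fun u => lpLen G σ u.1) :=
    Finset.le_sup (f := fun u => lpLen G σ u.1) (Finset.mem_attach _ ⟨u, hu⟩)
  omega

open Classical in
lemma lpLen_exists (G : SimpleGraph V) (σ : V ≃ Fin (Fintype.card V)) (v : V) :
    ∃ l : List V, l.Chain' G.Adj ∧ (l.map fun x => σ x).Chain' (· < ·) ∧
      l.length = lpLen G σ v ∧ l.getLast? = some v := by
  have H : ∀ N : ℕ, ∀ v : V, (σ v : ℕ) < N →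
      ∃ l : List V, l.Chain' G.Adj ∧ (l.map fun x => σ x).Chain' (· < ·) ∧
        l.length = lpLen G σ v ∧ l.getLast? = some v := by
    intro N
    induction N with
    | zero => intro v hv; omega
    | succ N ih =>
      intro v hv
      rw [lpLen]
      rcases (Finset.univ.filter (fun u => G.Adj u v ∧ σ u < σ v)).eq_empty_or_nonempty
        with he | hne
      · refine ⟨[v], by simp [List.Chain'], by simp [List.Chain'], ?_, by simp⟩
        rw [he]
        simp
      · obtain ⟨u, -, hsup⟩ := Finset.exists_mem_eq_sup _ (hne.attach)
          (fun u : {x // x ∈ Finset.univ.filter (fun u => G.Adj u v ∧ σ u < σ v)} =>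
            lpLen G σ u.1)
        have hu := u.2
        simp only [Finset.mem_filter] at hu
        obtain ⟨-, hadj, hlt⟩ := hu
        obtain ⟨l, hc, hm, hlen, hlast⟩ := ih u.1 (by omega)
        refine ⟨l ++ [v], ?_, ?_, ?_, List.getLast?_concat⟩
        · unfold List.Chain'
          rw [List.isChain_append]
          refine ⟨hc, by simp, ?_⟩
          intro x hx y hy
          rw [hlast] at hx
          simp at hx hy
          subst hx; subst hy; exact hadj
        · unfold List.Chain'
          rw [List.map_append, List.isChain_append]
          refine ⟨hm, by simp, ?_⟩
          intro x hx y hy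
          simp only [List.getLast?_map, hlast, Option.map_some] at hx
          simp at hx hy
          subst hx; subst hy; exact hlt
        · rw [hsup]
          simp [hlen]
          omega
  exact H (Fintype.card V) v (σ v).2

end Aux

/-- The linear altitude of `G`: the largest `k` such that every linear ordering of the
vertices of `G` contains a monotonic path with `k` vertices, where a monotonic path is a
path of `G` whose vertices appear in increasing order in the ordering. -/
noncomputable def linAltitude {V : Type*} [Fintype V] (G : SimpleGraph V) : ℕ :=
  sSup {k | ∀ σ : V ≃ Fin (Fintype.card V), ∃ l : List V,
    l.Chain' G.Adj ∧ (l.map fun x => σ x).Chain' (· < ·) ∧ l.length = k}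

/-- For every nonempty finite simple graph `G`, the linear altitude of `G` equals the
chromatic number of `G`. -/
theorem linAltitude_eq_chromaticNumber {V : Type*} [Fintype V] [Nonempty V]
    (G : SimpleGraph V) :
    (linAltitude G : ℕ∞) = G.chromaticNumber := by
  classical
  set n := Fintype.card V with hn
  set c := G.chromaticNumber.toNat with hc
  have hcol : G.Colorable c := G.colorable_chromaticNumber_of_fintype
  have hne : G.chromaticNumber ≠ ⊤ := by
    rw [SimpleGraph.chromaticNumber_ne_top_iff_exists]
    exact ⟨n, G.colorable_of_fintype⟩
  set S := {k | ∀ σ : V ≃ Fin (Fintype.card V), ∃ l : List V,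
    l.Chain' G.Adj ∧ (l.map fun x => σ x).Chain' (· < ·) ∧ l.length = k} with hS
  -- Lower bound: `c ∈ S` (Gallai–Roy).
  have hmem : c ∈ S := by
    intro σ
    set L := Finset.univ.sup (lpLen G σ) with hL
    have hle : ∀ v, lpLen G σ v ≤ L := fun v => Finset.le_sup (Finset.mem_univ v)
    have hL1 : 1 ≤ L := le_trans (lpLen_pos G σ (Classical.arbitrary V)) (hle _)
    -- The coloring by longest path length.
    have hcolL : G.Colorable L := by
      refine ⟨SimpleGraph.Coloring.mk
        (fun v => ⟨lpLen G σ v - 1, by have := lpLen_pos G σ v; have := hle v; omega⟩) ?_⟩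
      intro u v hadj h
      have h1 := lpLen_pos G σ u
      have h2 := lpLen_pos G σ v
      have hval : lpLen G σ u - 1 = lpLen G σ v - 1 := congrArg Fin.val h
      have hneq : σ u ≠ σ v := fun e => hadj.ne (σ.injective e)
      rcases lt_or_gt_of_ne hneq with hlt | hlt
      · have := lpLen_lt G σ hadj hlt; omega
      · have := lpLen_lt G σ hadj.symm hlt; omega
    have hcL : c ≤ L := by
      have := hcolL.chromaticNumber_le
      rw [hc]
      exact ENat.toNat_le_of_le_coe this
    obtain ⟨v, -, hv⟩ := Finset.exists_mem_eq_sup Finset.univ Finset.univ_nonempty (lpLen G σ)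
    obtain ⟨l, hch, hm, hlen, -⟩ := lpLen_exists G σ v
    refine ⟨l.take c, hch.take c, ?_, ?_⟩
    · rw [List.map_take]; exact hm.take c
    · rw [List.length_take, hlen, ← hv]
      omega
  -- Upper bound: every `k ∈ S` satisfies `k ≤ c`.
  have hub : ∀ k ∈ S, k ≤ c := by
    intro k hk
    obtain ⟨C⟩ := hcol
    letI : LinearOrder V := LinearOrder.lift'
      (fun v => toLex ((C v, Fintype.equivFin V v) : Fin c × Fin n))
      (fun a b hab => (Fintype.equivFin V).injective
        (congrArg Prod.snd (toLex.injective hab)))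
    have hltiff : ∀ a b : V, a < b ↔
        toLex ((C a, Fintype.equivFin V a) : Fin c × Fin n) <
          toLex ((C b, Fintype.equivFin V b) : Fin c × Fin n) := by
      intro a b
      exact Iff.rfl
    let σiso : Fin n ≃o V := Fintype.orderIsoFinOfCardEq V rfl
    obtain ⟨l, hch, hm, hlen⟩ := hk σiso.symm.toEquiv
    -- colors strictly increase along `l`
    have hcolor : (l.map C).Chain' (· < ·) := by
      unfold List.Chain' at hm hch ⊢
      rw [List.isChain_iff_getElem] at hm hch ⊢
      intro i hi
      simp only [List.length_map] at hi ⊢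
      have hadj := hch i (by simpa using hi)
      have hmlt := hm i (by simpa using hi)
      simp only [List.getElem_map] at hmlt ⊢
      have hvlt : l.get ⟨i, by omega⟩ < l.get ⟨i + 1, by omega⟩ :=
        σiso.symm.lt_iff_lt.mp hmlt
      have := (hltiff _ _).mp hvlt
      rcases Prod.Lex.lt_iff.mp this with h' | h'
      · simpa using h'
      · exact absurd h'.1 (C.valid hadj)
    have hnd : (l.map C).Nodup := by
      have hp := (List.isChain_iff_pairwise).mp hcolor
      exact hp.imp ne_of_lt
    have := hnd.length_le_card
    simpa [hlen] using this
  -- Conclude.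
  have hsup : linAltitude G = c := by
    rw [linAltitude]
    exact le_antisymm (csSup_le ⟨c, hmem⟩ hub) (le_csSup ⟨c, hub⟩ hmem)
  rw [hsup, hc, ENat.coe_toNat hne]
end

section
/- For every finite simple graph G with at least one edge, α∘(G) ≤ χ(G): if V(G) is partitioned into s stable (independent) sets, then every circular ordering of V(G) that places the vertices of each stable set consecutively (first all vertices of the first set, then all vertices of the second set, and so on) has no monotonic cycle with more than s vertices; in particular the circular altitude is at most the chromatic number. -/
open SimpleGraph

/-- A list of vertices forms a cycle of `G` (single edges count as cycles of length 2):
at least two vertices, no repetitions, and consecutive vertices (cyclically) adjacent. -/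
def IsCycleList {V : Type*} (G : SimpleGraph V) (l : List V) : Prop :=
  2 ≤ l.length ∧ l.Nodup ∧
    ∀ i : Fin l.length,
      G.Adj (l.get i) (l.get ⟨((i : ℕ) + 1) % l.length, Nat.mod_lt _ i.pos⟩)

/-- A cycle of `G` is monotonic for a circular ordering `σ` of the vertices if, after a
suitable rotation, its vertices appear in increasing order of position, i.e. the vertices
`u_1, …, u_k, u_1` of the cycle appear in this cyclic order in `σ`. -/
def IsMonotonicCycle {V : Type*} [Fintype V] (G : SimpleGraph V)
    (σ : V ≃ Fin (Fintype.card V)) (l : List V) : Prop :=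
  IsCycleList G l ∧ ∃ r : ℕ, ((l.rotate r).map fun x => (σ x : ℕ)).Chain' (· < ·)

/-- The circular altitude of `G`: the largest `k` such that every circular ordering of
the vertices of `G` contains a monotonic cycle with at least `k` vertices. -/
noncomputable def circAltitude {V : Type*} [Fintype V] (G : SimpleGraph V) : ℕ :=
  sSup {k | ∀ σ : V ≃ Fin (Fintype.card V), ∃ l : List V,
    IsMonotonicCycle G σ l ∧ k ≤ l.length}

/-- For every finite simple graph `G` with at least one edge, `α∘(G) ≤ χ(G)`:
if `V(G)` is partitioned into `s` stable sets (i.e. properly coloured by `s` colours),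
then every circular ordering of `V(G)` placing the vertices of each stable set
consecutively (first all vertices of the first set, then all vertices of the second set,
and so on) has no monotonic cycle with more than `s` vertices; in particular, the
circular altitude is at most the chromatic number. -/
theorem circAltitude_le_chromaticNumber {V : Type*} [Fintype V]
    (G : SimpleGraph V) (hedge : ∃ a b : V, G.Adj a b) :
    (∀ (s : ℕ) (P : V → Fin s), (∀ a b : V, G.Adj a b → P a ≠ P b) →
      ∀ σ : V ≃ Fin (Fintype.card V), (∀ a b : V, P a < P b → σ a < σ b) →
        ∀ l : List V, IsMonotonicCycle G σ l → l.length ≤ s) ∧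
    (circAltitude G : ℕ∞) ≤ G.chromaticNumber := by
  have key : ∀ (s : ℕ) (P : V → Fin s), (∀ a b : V, G.Adj a b → P a ≠ P b) →
      ∀ σ : V ≃ Fin (Fintype.card V), (∀ a b : V, P a < P b → σ a < σ b) →
        ∀ l : List V, IsMonotonicCycle G σ l → l.length ≤ s := by
    intro s P hP σ hσ l hl
    obtain ⟨⟨hk, hnd, hadj⟩, r, hchain⟩ := hl
    set l' := l.rotate r with hl'def
    have hlen : l'.length = l.length := List.length_rotate l r
    rw [List.Chain', List.isChain_map, List.isChain_iff_getElem] at hchain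
    have hstep : ∀ (i : ℕ) (h : i < l'.length - 1),
        P (l'.get ⟨i, by omega⟩) < P (l'.get ⟨i + 1, by omega⟩) := by
      intro i h
      have hσlt : (σ (l'.get ⟨i, by omega⟩) : ℕ) < σ (l'.get ⟨i + 1, by omega⟩) := by
        simpa using hchain i (by omega)
      have hA : G.Adj (l'.get ⟨i, by omega⟩) (l'.get ⟨i + 1, by omega⟩) := by
        have hpos : 0 < l.length := by omega
        have hget1 : l'.get ⟨i, by omega⟩ =
            l.get ⟨(i + r) % l.length, Nat.mod_lt _ hpos⟩ := by
          rw [List.get_rotate]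
        have hget2 : l'.get ⟨i + 1, by omega⟩ =
            l.get ⟨(i + 1 + r) % l.length, Nat.mod_lt _ hpos⟩ := by
          rw [List.get_rotate]
        rw [hget1, hget2]
        have h3 := hadj ⟨(i + r) % l.length, Nat.mod_lt _ hpos⟩
        have h2 : ((i + r) % l.length + 1) % l.length = (i + 1 + r) % l.length := by
          rw [Nat.mod_add_mod]
          congr 1
          omega
        simp only [h2] at h3
        exact h3
      have hne : P (l'.get ⟨i, by omega⟩) ≠ P (l'.get ⟨i + 1, by omega⟩) := hP _ _ hA
      rcases hne.lt_or_gt with h' | h'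
      · exact h'
      · exact absurd (hσ _ _ h') (by omega)
    have hchainP : (l'.map P).Chain' (· < ·) :=
      (List.isChain_map P).mpr (List.isChain_iff_getElem.mpr fun i h => by simpa using hstep i (by omega))
    have hndP : (l'.map P).Nodup := (List.isChain_iff_pairwise.mp hchainP).nodup
    have := hndP.length_le_card
    simpa [hlen] using this
  refine ⟨key, ?_⟩
  set n := ENat.toNat G.chromaticNumber with hn
  have hcol : G.Colorable n := G.colorable_chromaticNumber_of_fintype
  have hne : G.chromaticNumber ≠ ⊤ := by
    have := G.colorable_of_fintype.chromaticNumber_le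
    exact ne_top_of_le_ne_top (by simp) this
  have hχ : G.chromaticNumber = (n : ℕ∞) := (ENat.coe_toNat hne).symm
  rw [hχ, Nat.cast_le]
  -- build the ordering σ from a coloring
  obtain ⟨C⟩ := hcol
  classical
  let e := Fintype.equivFin V
  let f : V → Lex (Fin n × Fin (Fintype.card V)) := fun v => toLex (C v, e v)
  have hf : Function.Injective f := by
    intro a b h
    have := congrArg (fun x => (ofLex x).2) h
    exact e.injective this
  letI : LinearOrder V := LinearOrder.lift' f hf
  let σiso := monoEquivOfFin V rfl
  let σ : V ≃ Fin (Fintype.card V) := σiso.symm.toEquiv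
  have hσ : ∀ a b : V, C a < C b → σ a < σ b := by
    intro a b h
    have hab : a < b := by
      show f a < f b
      exact Prod.Lex.left _ _ h
    exact σiso.symm.lt_iff_lt.mpr hab
  apply csSup_le'
  intro k hk
  obtain ⟨l, hl, hkl⟩ := hk σ
  exact hkl.trans (key n (fun v => C v) (fun a b hab => C.valid hab) σ hσ l hl)
end

section
/- If G is a finite simple graph with α∘(G) > 2, then α∘(G) ≥ girth(G), the length of a shortest cycle of G. -/
open SimpleGraph

section Aux

variable {V : Type*} {G : SimpleGraph V}

/-- Build a walk along a list whose consecutive entries are adjacent. -/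
def chainWalk (G : SimpleGraph V) :
    ∀ (a c : V) (l : List V), List.Chain G.Adj a l →
      (a :: l).getLast (List.cons_ne_nil a l) = c → G.Walk a c
  | a, c, [], _, hc => SimpleGraph.Walk.nil.copy rfl (by simpa using hc)
  | a, c, b :: l, h, hc =>
      SimpleGraph.Walk.cons (List.chain_cons.mp h).1
        (chainWalk G b c l (List.chain_cons.mp h).2
          (by rwa [List.getLast_cons_cons] at hc))

lemma chainWalk_support :
    ∀ (a c : V) (l : List V) (h : List.Chain G.Adj a l)
      (hc : (a :: l).getLast (List.cons_ne_nil a l) = c),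
      (chainWalk G a c l h hc).support = a :: l
  | a, c, [], h, hc => by subst hc; rfl
  | a, c, b :: l, h, hc => by
      simp [chainWalk]
      exact chainWalk_support b c l _ _

lemma chainWalk_length :
    ∀ (a c : V) (l : List V) (h : List.Chain G.Adj a l)
      (hc : (a :: l).getLast (List.cons_ne_nil a l) = c),
      (chainWalk G a c l h hc).length = l.length
  | a, c, [], h, hc => by subst hc; rfl
  | a, c, b :: l, h, hc => by
      simp [chainWalk]
      exact chainWalk_length b c l _ _

lemma chainWalk_edges_cons (a c b : V) (l : List V) (h : List.Chain G.Adj a (b :: l))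
    (hc : (a :: b :: l).getLast (List.cons_ne_nil _ _) = c) :
    (chainWalk G a c (b :: l) h hc).edges =
      s(a, b) :: (chainWalk G b c l (List.chain_cons.mp h).2
        (by rwa [List.getLast_cons_cons] at hc)).edges := rfl

lemma egirth_le_of_cycleList (l : List V) (hc : IsCycleList G l) (h3 : 3 ≤ l.length) :
    G.egirth ≤ (l.length : ℕ∞) := by
  obtain ⟨hlen2, hnd, hadj⟩ := hc
  have hch' : l.Chain' G.Adj := by
    show l.IsChain G.Adj
    rw [List.isChain_iff_getElem]
    intro i hi
    have h1 : ((i : ℕ) + 1) % l.length = i + 1 := Nat.mod_eq_of_lt (by omega)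
    have := hadj ⟨i, by omega⟩
    simpa [h1] using this
  obtain ⟨a, b, d, r, rfl⟩ : ∃ a b d r, l = a :: b :: d :: r := by
    match l, h3 with
    | a :: b :: d :: r, _ => exact ⟨a, b, d, r, rfl⟩
  · set l : List V := a :: b :: d :: r with hl
    have hne : l ≠ [] := by simp [hl]
    set c : V := l.getLast hne with hcdef
    have hch : List.Chain G.Adj a (b :: d :: r) := hch'
    have hgl : ((a :: (b :: d :: r)).getLast (List.cons_ne_nil _ _)) = c := rfl
    set q : G.Walk a c := chainWalk G a c (b :: d :: r) hch hgl with hqdef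
    have hsupp : q.support = a :: b :: d :: r := chainWalk_support _ _ _ _ _
    have hpath : q.IsPath := by
      rw [SimpleGraph.Walk.isPath_def, hsupp]
      exact hnd
    -- c is the last element, which lies in d :: r
    have hc_mem : c ∈ d :: r := by
      have : c = (d :: r).getLast (List.cons_ne_nil _ _) :=
        List.getLast_cons_cons.trans List.getLast_cons_cons
      rw [this]
      exact List.getLast_mem _
    have hand : a ∉ b :: d :: r ∧ b ∉ d :: r := by
      constructor
      · exact (List.nodup_cons.mp hnd).1
      · exact (List.nodup_cons.mp (List.nodup_cons.mp hnd).2).1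
    have hca : c ≠ a := fun hca => hand.1 (hca ▸ (List.mem_cons_of_mem b hc_mem))
    have hcb : c ≠ b := fun hcb => hand.2 (hcb ▸ hc_mem)
    -- adjacency from last to first
    have hadjca : G.Adj c a := by
      have := hadj ⟨l.length - 1, by simp [hl]⟩
      have hm : (l.length - 1 + 1) % l.length = 0 := by
        have h1 : l.length - 1 + 1 = l.length := by simp [hl]
        rw [h1, Nat.mod_self]
      have hgetlast : l.get ⟨l.length - 1, by simp [hl]⟩ = c := by
        rw [hcdef, List.getLast_eq_getElem]
        rfl
      have hget0 : l.get ⟨(l.length - 1 + 1) % l.length, Nat.mod_lt _ (by simp [hl])⟩ = a := by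
        simp [hm, hl]
      rw [hgetlast, hget0] at this
      exact this
    -- the closing edge is not an edge of q
    have he : s(c, a) ∉ q.edges := by
      intro hmem
      rw [hqdef, chainWalk_edges_cons] at hmem
      rcases List.mem_cons.mp hmem with h1 | h2
      · rw [Sym2.eq_iff] at h1
        rcases h1 with ⟨h1, _⟩ | ⟨h1, _⟩
        · exact hca h1
        · exact hcb h1
      · have : a ∈ (chainWalk G b c (d :: r) (List.chain_cons.mp hch).2 _).support :=
          SimpleGraph.Walk.snd_mem_support_of_mem_edges _ h2
        have hsub : ∀ h' hc', a ∈ (chainWalk G b c (d :: r) h' hc').support →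
            a ∈ b :: d :: r := by
          intro h' hc' hm
          rwa [chainWalk_support] at hm
        exact hand.1 (hsub _ _ this)
    have hcyc : (SimpleGraph.Walk.cons hadjca (↑(⟨q, hpath⟩ : G.Path a c))).IsCycle :=
      SimpleGraph.Path.cons_isCycle ⟨q, hpath⟩ hadjca he
    have hlenw : (SimpleGraph.Walk.cons hadjca q).length = l.length := by
      rw [SimpleGraph.Walk.length_cons, hqdef, chainWalk_length]
      simp [hl]
    have hle : G.egirth ≤ ((SimpleGraph.Walk.cons hadjca q).length : ℕ∞) := by
      rw [SimpleGraph.egirth]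
      exact iInf_le_of_le c (iInf_le_of_le (SimpleGraph.Walk.cons hadjca q)
        (iInf_le _ hcyc))
    rwa [hlenw] at hle

end Aux

/-- If `G` is a finite simple graph with `α∘(G) > 2`, then `α∘(G) ≥ girth(G)`,
the length of a shortest cycle of `G`. -/
theorem girth_le_circAltitude {V : Type*} [Fintype V]
    (G : SimpleGraph V) (h : 2 < circAltitude G) :
    G.egirth ≤ (circAltitude G : ℕ∞) := by
  set S : Set ℕ := {k | ∀ σ : V ≃ Fin (Fintype.card V), ∃ l : List V,
    IsMonotonicCycle G σ l ∧ k ≤ l.length} with hSdef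
  have hca : circAltitude G = sSup S := rfl
  rw [hca] at h
  have hne : S.Nonempty := by
    by_contra hS0
    rw [Set.not_nonempty_iff_eq_empty] at hS0
    rw [hS0, csSup_empty] at h
    simp at h
  have hbdd : BddAbove S := by
    by_contra hb
    have hinf : S.Infinite := fun hfin => hb hfin.bddAbove
    rw [Set.Infinite.Nat.sSup_eq_zero hinf] at h
    omega
  have hmem : sSup S ∈ S := Nat.sSup_mem hne hbdd
  have hgS : G.girth ∈ S := by
    intro σ
    obtain ⟨l, hm, hlen⟩ := hmem σ
    have h3 : 3 ≤ l.length := le_trans (by omega) hlen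
    have hle := egirth_le_of_cycleList l hm.1 h3
    refine ⟨l, hm, ?_⟩
    have := ENat.toNat_le_toNat hle (by simp : (l.length : ℕ∞) ≠ ⊤)
    simpa [SimpleGraph.girth] using this
  have hgle : G.girth ≤ sSup S := le_csSup hbdd hgS
  have hnt : G.egirth ≠ ⊤ := by
    obtain ⟨l, hm, hlen⟩ := hmem (Fintype.equivFin V)
    have h3 : 3 ≤ l.length := le_trans (by omega) hlen
    exact ne_top_of_le_ne_top (by simp) (egirth_le_of_cycleList l hm.1 h3)
  calc G.egirth = (G.girth : ℕ∞) := (ENat.coe_toNat hnt).symm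
    _ ≤ (circAltitude G : ℕ∞) := by
        rw [hca]; exact_mod_cast hgle
end

section
/- Suppose G is a finite simple graph with at least one edge, r ≥ 0, χ(M^r(G)) = t where t is odd, and the length of the shortest odd cycle of G is strictly greater than t (in particular this holds if G has no odd cycle). Then α∘(M^r(G)) < t. -/
open SimpleGraph

/-- The Mycielskian `M(G)` of a graph `G`: the vertex set is
`{w} ∪ {aᵘ : a ∈ V(G)} ∪ {aᵛ : a ∈ V(G)}`, encoded with `w = none`,
`aᵘ = some (Sum.inl a)` and `aᵛ = some (Sum.inr a)`.  The vertices `aᵛ` induce a copy of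
`G`, the vertex `w` is adjacent to every `aᵘ`, and for every edge `ab` of `G` the edges
`aᵘbᵛ` and `bᵘaᵛ` are present; there are no other edges. -/
def mycielskian {V : Type u} (G : SimpleGraph V) : SimpleGraph (Option (V ⊕ V)) where
  Adj x y :=
    match x, y with
    | none, some (Sum.inl _) => True
    | some (Sum.inl _), none => True
    | some (Sum.inr a), some (Sum.inr b) => G.Adj a b
    | some (Sum.inl a), some (Sum.inr b) => G.Adj a b
    | some (Sum.inr a), some (Sum.inl b) => G.Adj a b
    | _, _ => False
  symm := by
    constructor
    rintro (_ | (a | a)) (_ | (b | b)) h <;> first | trivial | exact h.symm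
  loopless := by
    constructor
    rintro (_ | (a | a)) h <;> first | trivial | exact G.loopless.irrefl a h

/-- The vertex set of the `r`-fold iterated Mycielskian `M^r(G)` of a graph on `V`. -/
def IterMycVert (V : Type u) : ℕ → Type u
  | 0 => V
  | r + 1 => Option (IterMycVert V r ⊕ IterMycVert V r)

instance iterMycVertFintype (V : Type u) [Fintype V] : ∀ r : ℕ, Fintype (IterMycVert V r)
  | 0 => inferInstanceAs (Fintype V)
  | r + 1 =>
    have := iterMycVertFintype V r
    inferInstanceAs (Fintype (Option (IterMycVert V r ⊕ IterMycVert V r)))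

instance iterMycVertDecEq (V : Type u) [DecidableEq V] :
    ∀ r : ℕ, DecidableEq (IterMycVert V r)
  | 0 => inferInstanceAs (DecidableEq V)
  | r + 1 =>
    have := iterMycVertDecEq V r
    inferInstanceAs (DecidableEq (Option (IterMycVert V r ⊕ IterMycVert V r)))

/-- The `r`-fold iterated Mycielskian `M^r(G)`, with `M^0(G) = G`. -/
def iterMycielskian {V : Type u} (G : SimpleGraph V) :
    ∀ r : ℕ, SimpleGraph (IterMycVert V r)
  | 0 => G
  | r + 1 => mycielskian (iterMycielskian G r)

/-- Words of length `r` in the letters `u, v` are encoded as functions `Fin r → Bool`,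
with `u = true` and `v = false`.  Words are read from right to left: index `0` is the
rightmost letter (the superscript applied first) and index `r - 1` is the leftmost
letter (the superscript applied last); thus index `s` corresponds to position `s + 1`
of the word, reading right to left. -/
abbrev MycWord (r : ℕ) := Fin r → Bool

/-- The vertex `i^W` of `M^r(G)`: the vertex `i ∈ V(G)` decorated by the word `W`
of length `r` in the letters `u, v` (applied right to left). -/
def wordVert {V : Type u} : ∀ {r : ℕ}, MycWord r → V → IterMycVert V r
  | 0, _, a => a
  | r + 1, W, a =>
    if W (Fin.last r) = true then
      some (Sum.inl (wordVert (fun k => W k.castSucc) a))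
    else
      some (Sum.inr (wordVert (fun k => W k.castSucc) a))

/-- The vertex `w_j^U` of `M^r(G)` (for `1 ≤ j ≤ r`): the apex vertex `w_j` introduced at
the `j`-th Mycielski step, decorated by the word `U` of length `r - j` in the letters
`u, v` (applied right to left). -/
def wVert {V : Type u} : ∀ {r : ℕ} (j : ℕ), 1 ≤ j → j ≤ r → MycWord (r - j) →
    IterMycVert V r
  | 0, _, h1, h2, _ => absurd (h1.trans h2) (by omega)
  | r + 1, j, h1, h2, U =>
    if hj : j = r + 1 then none
    else
      have hjr : j ≤ r := by omega
      have hlt : r - j < r + 1 - j := by omega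
      if U ⟨r - j, hlt⟩ = true then
        some (Sum.inl (wVert j h1 hjr (fun k => U ⟨(k : ℕ), by have := k.isLt; omega⟩)))
      else
        some (Sum.inr (wVert j h1 hjr (fun k => U ⟨(k : ℕ), by have := k.isLt; omega⟩)))

/-- The lexicographic order on words of length `r` in `u, v`, reading from right to left
(index `0` first) with `v < u` (i.e. `false < true`). -/
def wordLT {r : ℕ} (W₁ W₂ : MycWord r) : Prop :=
  ∃ k : Fin r, W₁ k = false ∧ W₂ k = true ∧ ∀ m : Fin r, m < k → W₁ m = W₂ m


universe u_aux

namespace CircAltAux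

variable {V : Type u_aux}

/-- Binary weight of the word of a vertex. -/
def WF : (ρ : ℕ) → IterMycVert V ρ → ℕ
  | 0 => fun _ => 0
  | ρ + 1 => fun x =>
    match (x : Option (IterMycVert V ρ ⊕ IterMycVert V ρ)) with
    | none => 0
    | some (Sum.inl y) => 2 * WF ρ y + 1
    | some (Sum.inr y) => 2 * WF ρ y

/-- Whether a vertex is a word vertex. -/
def isWordF : (ρ : ℕ) → IterMycVert V ρ → Bool
  | 0 => fun _ => true
  | ρ + 1 => fun x =>
    match (x : Option (IterMycVert V ρ ⊕ IterMycVert V ρ)) with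
    | none => false
    | some (Sum.inl y) => isWordF ρ y
    | some (Sum.inr y) => isWordF ρ y

/-- The level of an apex vertex (junk `0` for word vertices). -/
def lvlF : (ρ : ℕ) → IterMycVert V ρ → ℕ
  | 0 => fun _ => 0
  | ρ + 1 => fun x =>
    match (x : Option (IterMycVert V ρ ⊕ IterMycVert V ρ)) with
    | none => ρ + 1
    | some (Sum.inl y) => lvlF ρ y
    | some (Sum.inr y) => lvlF ρ y

/-- The base vertex of a word vertex (junk `v₀` for apexes). -/
def baseF (v₀ : V) : (ρ : ℕ) → IterMycVert V ρ → V
  | 0 => fun x => x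
  | ρ + 1 => fun x =>
    match (x : Option (IterMycVert V ρ ⊕ IterMycVert V ρ)) with
    | none => v₀
    | some (Sum.inl y) => baseF v₀ ρ y
    | some (Sum.inr y) => baseF v₀ ρ y

/-- Tie-breaking value: `f` of the base for word vertices, `0` for apexes. -/
def tieF (f : V → ℕ) : (ρ : ℕ) → IterMycVert V ρ → ℕ
  | 0 => fun x => f x
  | ρ + 1 => fun x =>
    match (x : Option (IterMycVert V ρ ⊕ IterMycVert V ρ)) with
    | none => 0
    | some (Sum.inl y) => tieF f ρ y
    | some (Sum.inr y) => tieF f ρ y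

variable {G : SimpleGraph V}

lemma adj_cases {ρ : ℕ} (x y : Option (IterMycVert V ρ ⊕ IterMycVert V ρ))
    (h : (iterMycielskian G (ρ + 1)).Adj x y) :
    (∃ b, x = none ∧ y = some (Sum.inl b)) ∨ (∃ a, x = some (Sum.inl a) ∧ y = none) ∨
    (∃ a b, x = some (Sum.inr a) ∧ y = some (Sum.inr b) ∧ (iterMycielskian G ρ).Adj a b) ∨
    (∃ a b, x = some (Sum.inl a) ∧ y = some (Sum.inr b) ∧ (iterMycielskian G ρ).Adj a b) ∨
    (∃ a b, x = some (Sum.inr a) ∧ y = some (Sum.inl b) ∧ (iterMycielskian G ρ).Adj a b) := by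
  have h' : (mycielskian (iterMycielskian G ρ)).Adj x y := h
  rcases x with _ | (a | a) <;> rcases y with _ | (b | b) <;>
    first
      | exact h'.elim
      | exact Or.inl ⟨_, rfl, rfl⟩
      | exact Or.inr (Or.inl ⟨_, rfl, rfl⟩)
      | exact Or.inr (Or.inr (Or.inl ⟨_, _, rfl, rfl, h'⟩))
      | exact Or.inr (Or.inr (Or.inr (Or.inl ⟨_, _, rfl, rfl, h'⟩)))
      | exact Or.inr (Or.inr (Or.inr (Or.inr ⟨_, _, rfl, rfl, h'⟩)))

lemma div_pow_even (A e : ℕ) : (2 * A) / 2 ^ (e + 1) = A / 2 ^ e := by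
  rw [pow_succ, mul_comm (2 ^ e) 2, ← Nat.div_div_eq_div_mul,
    Nat.mul_div_cancel_left _ (by norm_num : (0:ℕ) < 2)]

lemma div_pow_odd (A e : ℕ) : (2 * A + 1) / 2 ^ (e + 1) = A / 2 ^ e := by
  rw [pow_succ, mul_comm (2 ^ e) 2, ← Nat.div_div_eq_div_mul]
  congr 1
  omega

lemma bit_hi_of {n e : ℕ} (h : (n / 2 ^ e) % 2 = 1) : 2 ^ e ≤ n := by
  by_contra hlt
  push_neg at hlt
  rw [Nat.div_eq_of_lt hlt] at h
  simp at h

lemma no_bit_lt {n e : ℕ} (h1 : n < 2 ^ (e + 1)) (h2 : (n / 2 ^ e) % 2 = 0) : n < 2 ^ e := by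
  by_contra hge
  push_neg at hge
  have h2e : (0:ℕ) < 2 ^ e := Nat.pow_pos (by norm_num)
  have hdiv : n / 2 ^ e = 1 := by
    have hlt2 : n / 2 ^ e < 2 := by
      rw [Nat.div_lt_iff_lt_mul h2e]
      have : 2 ^ (e+1) = 2 ^ e * 2 := by ring
      omega
    have hge1 : 1 ≤ n / 2 ^ e := (Nat.one_le_div_iff h2e).2 hge
    omega
  rw [hdiv] at h2
  simp at h2

/-- No edge joins two vertices whose words share a `u` in any position. -/
lemma adj_disj : ∀ {ρ : ℕ} (x y : IterMycVert V ρ), (iterMycielskian G ρ).Adj x y → ∀ e : ℕ,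
    ¬((WF ρ x / 2 ^ e) % 2 = 1 ∧ (WF ρ y / 2 ^ e) % 2 = 1) := by
  intro ρ
  induction ρ with
  | zero =>
    intro x y h e
    simp [WF]
  | succ ρ ih =>
    intro x y h e
    rcases adj_cases x y h with ⟨b, rfl, rfl⟩ | ⟨a, rfl, rfl⟩ |
      ⟨a, b, rfl, rfl, hab⟩ | ⟨a, b, rfl, rfl, hab⟩ | ⟨a, b, rfl, rfl, hab⟩
    · simp only [WF]
      intro hc
      simp [Nat.zero_div] at hc
    · simp only [WF]
      intro hc
      simp [Nat.zero_div] at hc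
    · simp only [WF]
      cases e with
      | zero =>
        intro hc
        simp [Nat.mul_mod_right] at hc
      | succ e =>
        rw [div_pow_even, div_pow_even]
        exact ih a b hab e
    · simp only [WF]
      cases e with
      | zero =>
        intro hc
        have := hc.2
        simp [Nat.mul_mod_right] at this
      | succ e =>
        rw [div_pow_odd, div_pow_even]
        exact ih a b hab e
    · simp only [WF]
      cases e with
      | zero =>
        intro hc
        have := hc.1
        simp [Nat.mul_mod_right] at this
      | succ e =>
        rw [div_pow_even, div_pow_odd]
        exact ih a b hab e

lemma WF_lt : ∀ (ρ : ℕ) (x : IterMycVert V ρ), WF ρ x < 2 ^ ρ := by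
  intro ρ
  induction ρ with
  | zero => intro x; simp [WF]
  | succ ρ ih =>
    intro x
    rcases (x : Option (IterMycVert V ρ ⊕ IterMycVert V ρ)) with _ | (y | y) <;>
      simp only [WF, pow_succ] <;> [positivity; skip; skip] <;>
      have := ih y <;> omega

lemma lvl_le : ∀ (ρ : ℕ) (x : IterMycVert V ρ), lvlF ρ x ≤ ρ := by
  intro ρ
  induction ρ with
  | zero => intro x; simp [lvlF]
  | succ ρ ih =>
    intro x
    rcases (x : Option (IterMycVert V ρ ⊕ IterMycVert V ρ)) with _ | (y | y) <;>
      simp only [lvlF] <;> first | omega | exact (ih y).trans (by omega)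

lemma lvl_pos : ∀ (ρ : ℕ) (x : IterMycVert V ρ), isWordF ρ x = false → 1 ≤ lvlF ρ x := by
  intro ρ
  induction ρ with
  | zero => intro x hx; simp [isWordF] at hx
  | succ ρ ih =>
    intro x hx
    rcases (x : Option (IterMycVert V ρ ⊕ IterMycVert V ρ)) with _ | (y | y) <;>
      simp only [lvlF, isWordF] at hx ⊢ <;> first | omega | exact ih y hx

/-- Apexes are padded with `v`s below their level. -/
lemma apex_pad : ∀ (ρ : ℕ) (x : IterMycVert V ρ), isWordF ρ x = false →
    WF ρ x < 2 ^ (ρ - lvlF ρ x) := by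
  intro ρ
  induction ρ with
  | zero => intro x hx; simp [isWordF] at hx
  | succ ρ ih =>
    intro x hx
    rcases (x : Option (IterMycVert V ρ ⊕ IterMycVert V ρ)) with _ | (y | y) <;>
      simp only [lvlF, isWordF, WF] at hx ⊢
    · simp
    · have h1 := ih y hx
      have h2 := lvl_le ρ y
      have h3 : ρ + 1 - lvlF ρ y = (ρ - lvlF ρ y) + 1 := by omega
      rw [h3, pow_succ]
      omega
    · have h1 := ih y hx
      have h2 := lvl_le ρ y
      have h3 : ρ + 1 - lvlF ρ y = (ρ - lvlF ρ y) + 1 := by omega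
      rw [h3, pow_succ]
      omega

/-- A word vertex adjacent to an apex has a `u` at the apex's level. -/
lemma adj_apex_word : ∀ {ρ : ℕ} (x y : IterMycVert V ρ), (iterMycielskian G ρ).Adj x y →
    isWordF ρ x = false → isWordF ρ y = true →
    (WF ρ y / 2 ^ (ρ - lvlF ρ x)) % 2 = 1 := by
  intro ρ
  induction ρ with
  | zero => intro x y _ hx _; simp [isWordF] at hx
  | succ ρ ih =>
    intro x y h hx hy
    rcases adj_cases x y h with ⟨b, rfl, rfl⟩ | ⟨a, rfl, rfl⟩ |
      ⟨a, b, rfl, rfl, hab⟩ | ⟨a, b, rfl, rfl, hab⟩ | ⟨a, b, rfl, rfl, hab⟩ <;>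
      simp only [isWordF, lvlF, WF] at hx hy ⊢
    · simp only [Nat.sub_self, pow_zero, Nat.div_one]
      omega
    · exact absurd hy (by simp)
    · have h2 := lvl_le ρ a
      have h3 : ρ + 1 - lvlF ρ a = (ρ - lvlF ρ a) + 1 := by
        have := lvl_pos ρ a hx
        omega
      rw [h3, div_pow_even]
      exact ih a b hab hx hy
    · have h2 := lvl_le ρ a
      have h3 : ρ + 1 - lvlF ρ a = (ρ - lvlF ρ a) + 1 := by
        have := lvl_pos ρ a hx
        omega
      rw [h3, div_pow_even]
      exact ih a b hab hx hy
    · have h2 := lvl_le ρ a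
      have h3 : ρ + 1 - lvlF ρ a = (ρ - lvlF ρ a) + 1 := by
        have := lvl_pos ρ a hx
        omega
      rw [h3, div_pow_odd]
      exact ih a b hab hx hy

/-- Two adjacent apexes have distinct levels. -/
lemma adj_apex_lvl_ne : ∀ {ρ : ℕ} (x y : IterMycVert V ρ), (iterMycielskian G ρ).Adj x y →
    isWordF ρ x = false → isWordF ρ y = false → lvlF ρ x ≠ lvlF ρ y := by
  intro ρ
  induction ρ with
  | zero => intro x y _ hx _; simp [isWordF] at hx
  | succ ρ ih =>
    intro x y h hx hy
    rcases adj_cases x y h with ⟨b, rfl, rfl⟩ | ⟨a, rfl, rfl⟩ |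
      ⟨a, b, rfl, rfl, hab⟩ | ⟨a, b, rfl, rfl, hab⟩ | ⟨a, b, rfl, rfl, hab⟩ <;>
      simp only [isWordF, lvlF] at hx hy ⊢
    · have := lvl_le ρ b; omega
    · have := lvl_le ρ a; omega
    · exact ih a b hab hx hy
    · exact ih a b hab hx hy
    · exact ih a b hab hx hy

/-- The lower-level apex of two adjacent apexes has a `u` at the other's level. -/
lemma adj_apex_apex : ∀ {ρ : ℕ} (x y : IterMycVert V ρ), (iterMycielskian G ρ).Adj x y →
    isWordF ρ x = false → isWordF ρ y = false → lvlF ρ x < lvlF ρ y →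
    (WF ρ x / 2 ^ (ρ - lvlF ρ y)) % 2 = 1 := by
  intro ρ
  induction ρ with
  | zero => intro x y _ hx _; simp [isWordF] at hx
  | succ ρ ih =>
    intro x y h hx hy hlt
    rcases adj_cases x y h with ⟨b, rfl, rfl⟩ | ⟨a, rfl, rfl⟩ |
      ⟨a, b, rfl, rfl, hab⟩ | ⟨a, b, rfl, rfl, hab⟩ | ⟨a, b, rfl, rfl, hab⟩ <;>
      simp only [isWordF, lvlF, WF] at hx hy hlt ⊢
    · have := lvl_le ρ b; omega
    · simp only [Nat.sub_self, pow_zero, Nat.div_one]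
      omega
    · have h2 := lvl_le ρ b
      have h3 : ρ + 1 - lvlF ρ b = (ρ - lvlF ρ b) + 1 := by
        have := lvl_pos ρ b hy
        omega
      rw [h3, div_pow_even]
      exact ih a b hab hx hy hlt
    · have h2 := lvl_le ρ b
      have h3 : ρ + 1 - lvlF ρ b = (ρ - lvlF ρ b) + 1 := by
        have := lvl_pos ρ b hy
        omega
      rw [h3, div_pow_odd]
      exact ih a b hab hx hy hlt
    · have h2 := lvl_le ρ b
      have h3 : ρ + 1 - lvlF ρ b = (ρ - lvlF ρ b) + 1 := by
        have := lvl_pos ρ b hy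
        omega
      rw [h3, div_pow_even]
      exact ih a b hab hx hy hlt

/-- Adjacent word vertices project to adjacent base vertices. -/
lemma adj_words (v₀ : V) : ∀ {ρ : ℕ} (x y : IterMycVert V ρ), (iterMycielskian G ρ).Adj x y →
    isWordF ρ x = true → isWordF ρ y = true →
    G.Adj (baseF v₀ ρ x) (baseF v₀ ρ y) := by
  intro ρ
  induction ρ with
  | zero => intro x y h _ _; exact h
  | succ ρ ih =>
    intro x y h hx hy
    rcases adj_cases x y h with ⟨b, rfl, rfl⟩ | ⟨a, rfl, rfl⟩ |
      ⟨a, b, rfl, rfl, hab⟩ | ⟨a, b, rfl, rfl, hab⟩ | ⟨a, b, rfl, rfl, hab⟩ <;>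
      simp only [isWordF, baseF] at hx hy ⊢
    · exact absurd hx (by simp)
    · exact absurd hy (by simp)
    · exact ih a b hab hx hy
    · exact ih a b hab hx hy
    · exact ih a b hab hx hy

lemma tie_word (f : V → ℕ) (v₀ : V) : ∀ (ρ : ℕ) (x : IterMycVert V ρ), isWordF ρ x = true →
    tieF f ρ x = f (baseF v₀ ρ x) := by
  intro ρ
  induction ρ with
  | zero => intro x _; rfl
  | succ ρ ih =>
    intro x hx
    rcases (x : Option (IterMycVert V ρ ⊕ IterMycVert V ρ)) with _ | (y | y) <;>
      simp only [isWordF, tieF, baseF] at hx ⊢ <;>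
      first | exact ih y hx | exact absurd hx (by simp)

lemma tie_lt (f : V → ℕ) (T : ℕ) (hT : 0 < T) (hf : ∀ v, f v < T) :
    ∀ (ρ : ℕ) (x : IterMycVert V ρ), tieF f ρ x < T := by
  intro ρ
  induction ρ with
  | zero => intro x; exact hf x
  | succ ρ ih =>
    intro x
    rcases (x : Option (IterMycVert V ρ ⊕ IterMycVert V ρ)) with _ | (y | y) <;>
      simp only [tieF] <;> first | exact hT | exact ih y


lemma lex_lt {T a b a' b' : ℕ} (hb : b < T) (h : a < a') : a * T + b < a' * T + b' := by
  have h1 : a * T + b < (a + 1) * T := by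
    rw [add_mul, one_mul]
    omega
  have h2 : (a + 1) * T ≤ a' * T := Nat.mul_le_mul_right T h
  omega

lemma lex_le {T a b a' b' : ℕ} (hb : b < T) (hb' : b' < T)
    (h : a * T + b < a' * T + b') : a ≤ a' := by
  by_contra hgt
  push_neg at hgt
  exact absurd (lex_lt (b' := b) hb' hgt) (by omega)

lemma lex_comp {T a b a' b' : ℕ} (hb : b < T) (hb' : b' < T)
    (h : a * T + b = a' * T + b') : a = a' ∧ b = b' := by
  rcases lt_trichotomy a a' with hlt | heq | hgt
  · exact absurd (lex_lt (b' := b') hb hlt) (by omega)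
  · exact ⟨heq, by rw [heq] at h; omega⟩
  · exact absurd (lex_lt (b' := b) hb' hgt) (by omega)

/-- Mycielskian colorability descent. -/
lemma myc_desc {W : Type u_aux} (H : SimpleGraph W) (n : ℕ)
    (h : (mycielskian H).Colorable n) : H.Colorable (n - 1) := by
  cases n with
  | zero => obtain ⟨C⟩ := h; exact (C none).elim0
  | succ n =>
    obtain ⟨C⟩ := h
    have hvalid : ∀ a b : W, H.Adj a b →
        (if C (some (Sum.inr a)) = C none then C (some (Sum.inl a)) else C (some (Sum.inr a))) ≠
        (if C (some (Sum.inr b)) = C none then C (some (Sum.inl b)) else C (some (Sum.inr b))) := by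
      intro a b hab
      have hadjvv : (mycielskian H).Adj (some (Sum.inr a)) (some (Sum.inr b)) := hab
      have hadjuv : (mycielskian H).Adj (some (Sum.inl a)) (some (Sum.inr b)) := hab
      have hadjvu : (mycielskian H).Adj (some (Sum.inr a)) (some (Sum.inl b)) := hab
      by_cases h1 : C (some (Sum.inr a)) = C none <;> by_cases h2 : C (some (Sum.inr b)) = C none <;>
        simp only [h1, h2, if_pos, if_neg, if_true, if_false]
      · exact absurd (h1.trans h2.symm) (C.valid hadjvv)
      · exact fun he => (C.valid hadjuv) he
      · exact fun he => (C.valid hadjvu) he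
      · exact C.valid hadjvv
    have hne : ∀ a : W,
        (if C (some (Sum.inr a)) = C none then C (some (Sum.inl a)) else C (some (Sum.inr a))) ≠
        C none := by
      intro a
      by_cases h1 : C (some (Sum.inr a)) = C none <;> simp only [h1, if_true, if_false]
      · have hadj : (mycielskian H).Adj (some (Sum.inl a)) none := trivial
        exact C.valid hadj
      · exact h1
    let C' : H.Coloring {c : Fin (n + 1) // c ≠ C none} :=
      SimpleGraph.Coloring.mk
        (fun a => ⟨if C (some (Sum.inr a)) = C none then C (some (Sum.inl a))
          else C (some (Sum.inr a)), hne a⟩)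
        (fun hab he => hvalid _ _ hab (congrArg Subtype.val he))
    have hcard : Fintype.card {c : Fin (n + 1) // c ≠ C none} = n := by
      simp [Fintype.card_subtype_compl]
    have := C'.colorable
    rw [hcard] at this
    simpa using this

lemma iter_desc (G : SimpleGraph V) : ∀ (r n : ℕ),
    (iterMycielskian G r).Colorable n → G.Colorable (n - r) := by
  intro r
  induction r with
  | zero => intro n h; exact h
  | succ r ih =>
    intro n h
    have h1 : (mycielskian (iterMycielskian G r)).Colorable n := h
    have h2 := myc_desc _ n h1
    have h3 := ih (n - 1) h2
    have : n - 1 - r = n - (r + 1) := by omega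
    rwa [this] at h3

lemma iter_edge (G : SimpleGraph V) (h : ∃ a b : V, G.Adj a b) :
    ∀ r : ℕ, ∃ x y : IterMycVert V r, (iterMycielskian G r).Adj x y := by
  intro r
  induction r with
  | zero => exact h
  | succ r ih =>
    obtain ⟨x, y, hxy⟩ := ih
    exact ⟨some (Sum.inr x), some (Sum.inr y), hxy⟩

/-- Build a walk from a chain of adjacent vertices. -/
lemma walk_of_chain {W : Type u_aux} (H : SimpleGraph W) :
    ∀ (lv : List W) (a : W), List.Chain H.Adj a lv →
    ∃ w : H.Walk a ((a :: lv).getLast (by simp)), w.length = lv.length := by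
  intro lv
  induction lv with
  | nil => intro a _; exact ⟨SimpleGraph.Walk.nil, rfl⟩
  | cons b lv ih =>
    intro a hch
    have hch : H.Adj a b ∧ List.Chain H.Adj b lv := List.isChain_cons_cons.1 hch
    obtain ⟨w, hw⟩ := ih b hch.2
    have hlast : ((a :: b :: lv).getLast (by simp)) = ((b :: lv).getLast (by simp)) := by
      rw [List.getLast_cons (by simp)]
    rw [hlast]
    exact ⟨SimpleGraph.Walk.cons hch.1 w, by simp [hw]⟩

/-- A closed odd walk contains an odd cycle. -/
lemma odd_closed_walk_cycle {W : Type u_aux} (H : SimpleGraph W) :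
    ∀ (n : ℕ) (a : W) (w : H.Walk a a), w.length ≤ n → Odd w.length →
    ∃ (b : W) (c : H.Walk b b), c.IsCycle ∧ Odd c.length ∧ c.length ≤ w.length := by
  classical
  intro n
  induction n with
  | zero =>
    intro a w hlen hodd
    have h0 : w.length = 0 := by omega
    rw [h0] at hodd
    exact absurd hodd (by decide)
  | succ n ih =>
    intro a w hlen hodd
    by_cases hnd : w.support.tail.Nodup
    · -- w is a cycle
      cases w with
      | nil => exact absurd hodd (by simp)
      | @cons _ b _ hadj p =>
        refine ⟨a, SimpleGraph.Walk.cons hadj p, ?_, hodd, le_refl _⟩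
        rw [SimpleGraph.Walk.cons_isCycle_iff]
        have hsup : p.support.Nodup := by
          simpa [SimpleGraph.Walk.support_cons] using hnd
        refine ⟨SimpleGraph.Walk.IsPath.mk' hsup, ?_⟩
        intro hedge
        -- the edge s(a,b) in p forces p to be short
        have hlen1 : p.length = 1 := by
          cases p with
          | nil => simp at hedge
          | @cons _ c _ hadj2 q =>
            rw [SimpleGraph.Walk.edges_cons, List.mem_cons] at hedge
            have hsup' : b ∉ q.support ∧ q.support.Nodup := by
              simpa [SimpleGraph.Walk.support_cons] using hsup
            rcases hedge with he | he
            · rw [Sym2.eq_iff] at he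
              rcases he with ⟨h1, h2⟩ | ⟨h1, h2⟩
              · -- a = b ∧ b = c
                exfalso
                have haq : a ∈ q.support := SimpleGraph.Walk.end_mem_support q
                rw [← h1] at hsup'
                exact hsup'.1 haq
              · -- a = c
                cases q with
                | nil => simp
                | @cons _ d _ hadj3 q2 =>
                  exfalso
                  have haq : a ∈ q2.support := SimpleGraph.Walk.end_mem_support q2
                  have hcq : (c :: q2.support).Nodup := by
                    simpa [SimpleGraph.Walk.support_cons] using hsup'.2
                  rw [List.nodup_cons] at hcq
                  rw [← h1] at hcq
                  exact hcq.1 haq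
            · -- edge deeper in q: then b appears twice
              exfalso
              have hb : b ∈ q.support := SimpleGraph.Walk.fst_mem_support_of_mem_edges q
                (by rwa [Sym2.eq_swap] at he)
              exact hsup'.1 hb
        have : (SimpleGraph.Walk.cons hadj p).length = 2 := by
          simp [SimpleGraph.Walk.length_cons, hlen1]
        rw [this] at hodd
        exact absurd hodd (by decide)
    · -- find a repeated vertex and split
      obtain ⟨x, hx⟩ := List.exists_duplicate_iff_not_nodup.2 hnd
      have hcount : 2 ≤ w.support.tail.count x := List.duplicate_iff_two_le_count.1 hx
      have hxs : x ∈ w.support := List.mem_of_mem_tail hx.mem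
      set w' := w.rotate x hxs with hw'
      have hlenrot : w'.length = w.length := by
        rw [hw']
        unfold SimpleGraph.Walk.rotate
        rw [SimpleGraph.Walk.length_append]
        have := congrArg SimpleGraph.Walk.length (w.take_spec hxs)
        rw [SimpleGraph.Walk.length_append] at this
        omega
      have hcount' : 2 ≤ w'.support.tail.count x := by
        have hperm : List.Perm w'.support.tail w.support.tail :=
          (SimpleGraph.Walk.support_rotate w x hxs).perm
        rw [hperm.count_eq]
        exact hcount
      cases hw2 : w' with
      | nil =>
        rw [hw2] at hlenrot
        simp at hlenrot
        rw [← hlenrot] at hodd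
        exact absurd hodd (by decide)
      | @cons _ y _ hadj p =>
        have hxp : x ∈ p.support := by
          rw [hw2] at hcount'
          simp only [SimpleGraph.Walk.support_cons, List.tail_cons] at hcount'
          exact List.count_pos_iff.1 (by omega)
        set take1 := p.takeUntil x hxp with ht1
        set drop1 := p.dropUntil x hxp with hd1
        have hspec : take1.append drop1 = p := p.take_spec hxp
        have hlensum : take1.length + drop1.length = p.length := by
          have := congrArg SimpleGraph.Walk.length hspec
          rwa [SimpleGraph.Walk.length_append] at this
        have hdropnn : 1 ≤ drop1.length := by
          by_contra hzero
          push_neg at hzero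
          have hz : drop1.length = 0 := by omega
          have hdnil : drop1 = SimpleGraph.Walk.nil := SimpleGraph.Walk.nil_iff_eq_nil.1 (SimpleGraph.Walk.length_eq_zero_iff.1 hz)
          have : take1.length = p.length := by omega
          have hponly : p = take1 := by
            rw [← hspec, hdnil]
            simp
          have hcnt1 : take1.support.count x = 1 :=
            SimpleGraph.Walk.count_support_takeUntil_eq_one p hxp
          rw [hw2] at hcount'
          simp only [SimpleGraph.Walk.support_cons, List.tail_cons] at hcount'
          rw [hponly] at hcount'
          omega
        have hw1len : (SimpleGraph.Walk.cons hadj take1).length = take1.length + 1 := by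
          simp
        have htotal : take1.length + 1 + drop1.length = w.length := by
          have : w'.length = p.length + 1 := by rw [hw2]; simp
          omega
        have hoddsplit : Odd (take1.length + 1) ∨ Odd drop1.length := by
          rcases hodd with ⟨m, hm⟩
          rcases Nat.even_or_odd (take1.length + 1) with he | ho
          · right
            rcases he with ⟨p1, hp1⟩
            refine Nat.odd_iff.2 ?_
            omega
          · left; exact ho
        rcases hoddsplit with ho | ho
        · have hlt : (SimpleGraph.Walk.cons hadj take1).length ≤ n := by
            rw [hw1len]; omega
          obtain ⟨b, c, hc1, hc2, hc3⟩ := ih x (SimpleGraph.Walk.cons hadj take1) hlt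
            (by rwa [hw1len])
          exact ⟨b, c, hc1, hc2, by rw [hw1len] at hc3; omega⟩
        · have hlt : drop1.length ≤ n := by omega
          obtain ⟨b, c, hc1, hc2, hc3⟩ := ih x drop1 hlt ho
          exact ⟨b, c, hc1, hc2, by omega⟩


theorem core [Fintype V] (G : SimpleGraph V) (v₀ : V) (s r t : ℕ) (hs : 2 ≤ s)
    (hst : s + r = t) (htodd : Odd t)
    (hoddgirth : ∀ (a : V) (w : G.Walk a a), w.IsCycle → Odd w.length → t < w.length)
    (c₀ : V → Fin s) (hc₀ : ∀ a b, G.Adj a b → c₀ a ≠ c₀ b)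
    (κ : IterMycVert V r → ℕ)
    (hκWlt : ∀ x y, WF r x < WF r y → κ x < κ y)
    (hκtie : ∀ x y, isWordF r x = true → isWordF r y = true → WF r x = WF r y →
      κ x < κ y → (c₀ (baseF v₀ r x) : ℕ) ≤ (c₀ (baseF v₀ r y) : ℕ))
    (l : List (IterMycVert V r)) (hlen : t ≤ l.length)
    (hadj : ∀ i : Fin l.length, (iterMycielskian G r).Adj (l.get i)
        (l.get ⟨((i : ℕ) + 1) % l.length, Nat.mod_lt _ i.pos⟩))
    (hsort : ∀ (i : ℕ) (h : i + 1 < l.length),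
      κ (l.get ⟨i, by omega⟩) < κ (l.get ⟨i + 1, h⟩)) :
    False := by
  have ht2 : 2 ≤ t := by omega
  have hL : 0 < l.length := by omega
  set L := l.length with hLdef
  let X : ℕ → IterMycVert V r := fun i => l.get ⟨i % L, Nat.mod_lt _ hL⟩
  have hadjX : ∀ i : ℕ, (iterMycielskian G r).Adj (X i) (X (i + 1)) := by
    intro i
    have h1 := hadj ⟨i % L, Nat.mod_lt _ hL⟩
    have h2 : (i % L + 1) % L = (i + 1) % L := Nat.mod_add_mod i L 1
    have h3 : (⟨(i % L + 1) % L, Nat.mod_lt _ hL⟩ : Fin L) = ⟨(i + 1) % L, Nat.mod_lt _ hL⟩ :=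
      Fin.ext h2
    have h4 : (⟨i % L % L, Nat.mod_lt _ hL⟩ : Fin L) = ⟨i % L, Nat.mod_lt _ hL⟩ :=
      Fin.ext (Nat.mod_eq_of_lt (Nat.mod_lt _ hL))
    simp only [X]
    convert h1 using 3
    exact h2.symm
  have hsortX : ∀ i : ℕ, i + 1 < L → κ (X i) < κ (X (i + 1)) := by
    intro i hi
    have h1 := hsort i hi
    have e1 : i % L = i := Nat.mod_eq_of_lt (by omega)
    have e2 : (i + 1) % L = i + 1 := Nat.mod_eq_of_lt hi
    have h3 : (⟨i % L, Nat.mod_lt _ hL⟩ : Fin L) = ⟨i, by omega⟩ := Fin.ext e1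
    have h4 : (⟨(i + 1) % L, Nat.mod_lt _ hL⟩ : Fin L) = ⟨i + 1, hi⟩ := Fin.ext e2
    simpa only [X, h3, h4] using h1
  -- Step: within a block of constant `v`-prefix at depth d, all but the last element
  -- extend the prefix.
  have step : ∀ d M, d < r → M ≤ L → (∀ i, i < M → WF r (X i) < 2 ^ (r - d)) →
      ∀ i, i < M - 1 → WF r (X i) < 2 ^ (r - (d + 1)) := by
    intro d M hdr hML hall i hi
    set e := r - (d + 1) with he
    have her : r - d = e + 1 := by omega
    have hx := hall i (by omega)
    have hy := hall (i + 1) (by omega)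
    rw [her] at hx hy
    by_cases hbx : (WF r (X i) / 2 ^ e) % 2 = 1
    · by_cases hby : (WF r (X (i + 1)) / 2 ^ e) % 2 = 1
      · exact absurd ⟨hbx, hby⟩ (adj_disj _ _ (hadjX i) e)
      · have h1 : WF r (X (i + 1)) < 2 ^ e := no_bit_lt hy (by omega)
        have h2 : 2 ^ e ≤ WF r (X i) := bit_hi_of hbx
        have h3 := hκWlt _ _ (show WF r (X (i + 1)) < WF r (X i) by omega)
        have h4 := hsortX i (by omega)
        omega
    · exact no_bit_lt hx (by omega)
  have iter : ∀ d₀ M₀, M₀ ≤ L → (∀ i, i < M₀ → WF r (X i) < 2 ^ (r - d₀)) →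
      ∀ k, d₀ + k ≤ r → ∀ i, i < M₀ - k → WF r (X i) < 2 ^ (r - (d₀ + k)) := by
    intro d₀ M₀ hM₀ hbase k
    induction k with
    | zero => intro _ i hi; simpa using hbase i (by omega)
    | succ k ih =>
      intro hk i hi
      have h1 := ih (by omega)
      have h2 := step (d₀ + k) (M₀ - k) (by omega) (by omega) h1 i (by omega)
      have hexp : r - (d₀ + k + 1) = r - (d₀ + (k + 1)) := by omega
      rwa [hexp] at h2
  have no_apex_pair : ∀ i j : ℕ, (iterMycielskian G r).Adj (X i) (X j) →
      WF r (X i) = 0 → WF r (X j) = 0 → isWordF r (X i) = true := by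
    intro i j hadjij h0i h0j
    by_contra hap
    rw [Bool.not_eq_true] at hap
    by_cases hw : isWordF r (X j) = true
    · have hbit := adj_apex_word (G := G) _ _ hadjij hap hw
      have := bit_hi_of hbit
      have hp : 0 < 2 ^ (r - lvlF r (X i)) := Nat.pow_pos (by norm_num)
      omega
    · rw [Bool.not_eq_true] at hw
      have hne := adj_apex_lvl_ne (G := G) _ _ hadjij hap hw
      rcases Nat.lt_or_ge (lvlF r (X i)) (lvlF r (X j)) with hlt | hge
      · have hbit := adj_apex_apex (G := G) _ _ hadjij hap hw hlt
        have := bit_hi_of hbit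
        have hp : 0 < 2 ^ (r - lvlF r (X j)) := Nat.pow_pos (by norm_num)
        omega
      · have hlt : lvlF r (X j) < lvlF r (X i) := by omega
        have hbit := adj_apex_apex (G := G) _ _ hadjij.symm hw hap hlt
        have := bit_hi_of hbit
        have hp : 0 < 2 ^ (r - lvlF r (X i)) := Nat.pow_pos (by norm_num)
        omega
  have words_block : ∀ M, 2 ≤ M → M ≤ L → (∀ i, i < M → WF r (X i) = 0) →
      ∀ i, i < M → isWordF r (X i) = true := by
    intro M hM2 hML hv0 i hi
    rcases Nat.lt_or_ge (i + 1) M with hi1 | hi1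
    · exact no_apex_pair i (i + 1) (hadjX i) (hv0 i hi) (hv0 (i + 1) hi1)
    · have hi0 : 1 ≤ i := by omega
      have hadji : (iterMycielskian G r).Adj (X (i - 1)) (X i) := by
        have := hadjX (i - 1)
        have hrw : i - 1 + 1 = i := by omega
        rwa [hrw] at this
      exact no_apex_pair i (i - 1) hadji.symm (hv0 i hi) (hv0 (i - 1) (by omega))
  have cbound : ∀ M, 2 ≤ M → M ≤ L → (∀ i, i < M → WF r (X i) = 0) → M ≤ s := by
    intro M hM2 hML hv0
    have words := words_block M hM2 hML hv0
    have hmono : ∀ i, i + 1 < M →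
        (c₀ (baseF v₀ r (X i)) : ℕ) < (c₀ (baseF v₀ r (X (i + 1))) : ℕ) := by
      intro i hi
      have hGadj := adj_words v₀ _ _ (hadjX i) (words i (by omega)) (words (i + 1) (by omega))
      have hne := hc₀ _ _ hGadj
      have hle := hκtie _ _ (words i (by omega)) (words (i + 1) (by omega))
        (by rw [hv0 i (by omega), hv0 (i + 1) (by omega)])
        (hsortX i (by omega))
      have hne' : (c₀ (baseF v₀ r (X i)) : ℕ) ≠ (c₀ (baseF v₀ r (X (i + 1))) : ℕ) :=
        fun h => hne (Fin.ext h)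
      omega
    let cl : List (Fin s) := (List.range M).map (fun i => c₀ (baseF v₀ r (X i)))
    have hcl_len : cl.length = M := by simp [cl]
    have hchain : cl.Chain' (· < ·) := by
      refine List.isChain_iff_getElem.2 ?_
      intro i hi
      rw [hcl_len] at hi
      simp only [cl, List.getElem_map, List.getElem_range]
      exact Fin.lt_def.2 (hmono i (by omega))
    have hpw : cl.Pairwise (· < ·) := List.isChain_iff_pairwise.1 hchain
    have hnd : cl.Nodup := hpw.imp (fun h => ne_of_lt h)
    have := hnd.length_le_card
    rw [hcl_len, Fintype.card_fin] at this
    exact this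
  have allv : ∀ i, i < L - r → WF r (X i) = 0 := by
    intro i hi
    have h1 := iter 0 L le_rfl (fun j _ => by simpa using WF_lt r (X j)) r (by omega) i (by omega)
    have hexp : r - (0 + r) = 0 := by omega
    rw [hexp] at h1
    simpa using Nat.lt_one_iff.1 (by simpa using h1)
  have hLle : L ≤ t := by
    have h2 := cbound (L - r) (by omega) (by omega) allv
    omega
  have hLt : L = t := by omega
  have branch_lo : ∀ k, 1 ≤ k → k ≤ r → 2 ^ (r - k) ≤ WF r (X (L - k)) := by
    intro k h1 h2
    by_contra hlow
    push_neg at hlow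
    have hpre : ∀ i, i < L - k + 1 → WF r (X i) < 2 ^ (r - k) := by
      intro i hi
      rcases Nat.lt_or_ge i (L - k) with h | h
      · have := iter 0 L le_rfl (fun j _ => by simpa using WF_lt r (X j)) k (by omega) i (by omega)
        have hexp : r - (0 + k) = r - k := by omega
        rwa [hexp] at this
      · have hieq : i = L - k := by omega
        rw [hieq]; exact hlow
    have h3 := iter k (L - k + 1) (by omega) hpre (r - k) (by omega)
    have h4 : ∀ i, i < s + 1 → WF r (X i) = 0 := by
      intro i hi
      have h5 := h3 i (by omega)
      have hexp : r - (k + (r - k)) = 0 := by omega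
      rw [hexp] at h5
      simpa using Nat.lt_one_iff.1 (by simpa using h5)
    have := cbound (s + 1) (by omega) (by omega) h4
    omega
  have branch_hi : ∀ k, 1 ≤ k → k ≤ r → WF r (X (L - k)) < 2 ^ (r - k + 1) := by
    intro k h1 h2
    have h3 := iter 0 L le_rfl (fun j _ => by simpa using WF_lt r (X j)) (k - 1) (by omega)
      (L - k) (by omega)
    have hexp : r - (0 + (k - 1)) = r - k + 1 := by omega
    rwa [hexp] at h3
  have words_branch : ∀ m k, 1 ≤ k → k ≤ r → r - k = m → isWordF r (X (L - k)) = true := by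
    intro m
    induction m using Nat.strong_induction_on with
    | _ m ih =>
      intro k hk1 hkr hm
      by_contra hap
      rw [Bool.not_eq_true] at hap
      have hj1 : 1 ≤ lvlF r (X (L - k)) := lvl_pos r _ hap
      have hjr : lvlF r (X (L - k)) ≤ r := lvl_le r _
      have hjk : lvlF r (X (L - k)) < k := by
        have hpad := apex_pad r _ hap
        have hlo := branch_lo k hk1 hkr
        have hlt2 : 2 ^ (r - k) < 2 ^ (r - lvlF r (X (L - k))) := lt_of_le_of_lt hlo hpad
        have := (Nat.pow_lt_pow_iff_right (by norm_num : 1 < 2)).1 hlt2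
        omega
      have hadjy : (iterMycielskian G r).Adj (X (L - k - 1)) (X (L - k)) := by
        have := hadjX (L - k - 1)
        have hrw : L - k - 1 + 1 = L - k := by omega
        rwa [hrw] at this
      have hyword : isWordF r (X (L - k - 1)) = true := by
        rcases Nat.lt_or_ge k r with hkr' | hkr'
        · have hidx : L - k - 1 = L - (k + 1) := by omega
          rw [hidx]
          exact ih (r - (k + 1)) (by omega) (k + 1) (by omega) (by omega) rfl
        · have hidx : L - k - 1 < L - r := by omega
          exact words_block (L - r) (by omega) (by omega) allv _ hidx
      have hbit := adj_apex_word (G := G) _ _ hadjy.symm hap hyword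
      have hge := bit_hi_of hbit
      have hylow : WF r (X (L - k - 1)) < 2 ^ (r - lvlF r (X (L - k))) := by
        rcases Nat.lt_or_ge k r with hkr' | hkr'
        · have h5 := branch_hi (k + 1) (by omega) (by omega)
          have hidx : L - (k + 1) = L - k - 1 := by omega
          rw [hidx] at h5
          have hexp : r - (k + 1) + 1 = r - k := by omega
          rw [hexp] at h5
          exact lt_of_lt_of_le h5 (Nat.pow_le_pow_right (by norm_num) (by omega))
        · have h5 := allv (L - k - 1) (by omega)
          rw [h5]
          exact Nat.pow_pos (by norm_num)
      omega
  have words_all : ∀ i, i < L → isWordF r (X i) = true := by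
    intro i hi
    rcases Nat.lt_or_ge i (L - r) with h | h
    · exact words_block (L - r) (by omega) (by omega) allv i h
    · have hk : i = L - (L - i) := by omega
      rw [hk]
      exact words_branch (r - (L - i)) (L - i) (by omega) (by omega) rfl
  -- build a closed walk of length L in G
  have walkto : ∀ m, m < L → ∃ w : G.Walk (baseF v₀ r (X 0)) (baseF v₀ r (X m)), w.length = m := by
    intro m
    induction m with
    | zero => exact fun _ => ⟨SimpleGraph.Walk.nil, rfl⟩
    | succ m ih =>
      intro hm
      obtain ⟨w, hw⟩ := ih (by omega)
      have hadjm := adj_words v₀ _ _ (hadjX m) (words_all m (by omega))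
        (words_all (m + 1) (by omega))
      exact ⟨w.concat hadjm, by simp [hw]⟩
  obtain ⟨w, hw⟩ := walkto (L - 1) (by omega)
  have hX0 : X L = X 0 := by
    simp only [X]
    congr 1
    exact Fin.ext (by simp [Nat.mod_self])
  have hwrapG : G.Adj (baseF v₀ r (X (L - 1))) (baseF v₀ r (X 0)) := by
    have h1 := hadjX (L - 1)
    have hrw : L - 1 + 1 = L := by omega
    rw [hrw, hX0] at h1
    exact adj_words v₀ _ _ h1 (words_all (L - 1) (by omega)) (words_all 0 (by omega))
  set wc := w.concat hwrapG with hwc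
  have hwclen : wc.length = t := by
    rw [hwc, SimpleGraph.Walk.length_concat, hw]
    omega
  obtain ⟨b, c, hcyc, hcodd, hclen⟩ := odd_closed_walk_cycle G wc.length _ wc le_rfl
    (by rw [hwclen]; exact htodd)
  have := hoddgirth b c hcyc hcodd
  omega


lemma edge_cycle {V' : Type u_aux} [Fintype V'] (H : SimpleGraph V')
    (σ' : V' ≃ Fin (Fintype.card V')) {x y : V'} (hxy : H.Adj x y)
    (hord : (σ' x : ℕ) < (σ' y : ℕ)) : IsMonotonicCycle H σ' [x, y] := by
  refine ⟨⟨by simp, by simp [hxy.ne], ?_⟩, 0, ?_⟩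
  · intro i
    rcases i with ⟨iv, hiv⟩
    have hiv2 : iv < 2 := by simpa using hiv
    interval_cases iv
    · have h3 : (⟨((0:ℕ) + 1) % [x, y].length, Nat.mod_lt _ (by positivity)⟩ : Fin [x,y].length)
          = ⟨1, by simp⟩ := Fin.ext (by simp)
      simp only [Fin.val_mk] at h3 ⊢
      rw [h3]
      exact hxy
    · have h3 : (⟨((1:ℕ) + 1) % [x, y].length, Nat.mod_lt _ (by positivity)⟩ : Fin [x,y].length)
          = ⟨0, by simp⟩ := Fin.ext (by simp)
      simp only [Fin.val_mk] at h3 ⊢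
      rw [h3]
      exact hxy.symm
  · simp only [List.rotate_zero, List.map_cons, List.map_nil]
    exact List.isChain_cons_cons.2 ⟨hord, List.isChain_singleton _⟩

end CircAltAux

/-- Suppose `G` is a finite simple graph with at least one edge, `r ≥ 0`,
`χ(M^r(G)) = t` where `t` is odd, and the length of the shortest odd cycle of `G` is
strictly greater than `t` (every odd cycle of `G` has length `> t`).  Then
`α∘(M^r(G)) < t`. -/
theorem circAltitude_iterMycielskian_lt {V : Type*} [Fintype V] (G : SimpleGraph V)
    (hedge : ∃ a b : V, G.Adj a b) (r t : ℕ)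
    (ht : (iterMycielskian G r).chromaticNumber = (t : ℕ∞)) (htodd : Odd t)
    (hoddgirth : ∀ (a : V) (w : G.Walk a a), w.IsCycle → Odd w.length → t < w.length) :
    circAltitude (iterMycielskian G r) < t := by
  classical
  obtain ⟨v₀, b₀, hab₀⟩ := hedge
  have htc : (iterMycielskian G r).Colorable t :=
    (chromaticNumber_le_iff_colorable).1 (le_of_eq ht)
  have hGs : G.Colorable (t - r) := CircAltAux.iter_desc G r t htc
  set s := t - r with hsdef
  have hs2 : 2 ≤ s := by
    by_contra hle
    push_neg at hle
    have h1 : G.Colorable 1 := hGs.mono (by omega)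
    obtain ⟨C1⟩ := h1
    exact C1.valid hab₀ (Subsingleton.elim _ _)
  have hst : s + r = t := by
    rcases le_or_gt r t with h | h
    · omega
    · exfalso; omega
  have htodd' := htodd
  obtain C0 := hGs.some
  set c₀ : V → Fin s := fun v => C0 v with hc₀def
  have hc₀ : ∀ a b, G.Adj a b → c₀ a ≠ c₀ b := fun a b h => C0.valid h
  -- the key function
  set NV := Fintype.card V with hNVdef
  have hNV : 0 < NV := Fintype.card_pos_iff.2 ⟨v₀⟩
  set eV : V → ℕ := fun v => ((Fintype.equivFin V) v : ℕ) with heVdef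
  set f : V → ℕ := fun v => (c₀ v : ℕ) * NV + eV v with hfdef
  set T : ℕ := s * NV + 1 with hTdef
  have hfT : ∀ v, f v < T := by
    intro v
    have h1 : (c₀ v : ℕ) * NV ≤ (s - 1) * NV := Nat.mul_le_mul_right NV (by
      have := (c₀ v).isLt; omega)
    have h2 : eV v < NV := ((Fintype.equivFin V) v).isLt
    have h3 : (s - 1) * NV + NV = s * NV := by
      have h4 : (s - 1) + 1 = s := by omega
      calc (s - 1) * NV + NV = ((s - 1) + 1) * NV := by rw [Nat.succ_mul]
        _ = s * NV := by rw [h4]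
    simp only [hfdef, hTdef]
    omega
  have hT0 : 0 < T := by omega
  set C : ℕ := Fintype.card (IterMycVert V r) + 1 with hCdef
  set gV : IterMycVert V r → ℕ := fun x => ((Fintype.equivFin (IterMycVert V r)) x : ℕ)
    with hgVdef
  have hgC : ∀ x, gV x < C := fun x => by
    have := ((Fintype.equivFin (IterMycVert V r)) x).isLt
    simp only [hgVdef, hCdef]
    omega
  set κ : IterMycVert V r → ℕ :=
    fun x => (CircAltAux.WF r x * T + CircAltAux.tieF f r x) * C + gV x with hκdef
  have htie_lt : ∀ x, CircAltAux.tieF f r x < T := fun x => CircAltAux.tie_lt f T hT0 hfT r x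
  have hκWlt : ∀ x y, CircAltAux.WF r x < CircAltAux.WF r y → κ x < κ y := by
    intro x y hW
    exact CircAltAux.lex_lt (hgC x) (CircAltAux.lex_lt (htie_lt x) hW)
  have hκtie : ∀ x y, CircAltAux.isWordF r x = true → CircAltAux.isWordF r y = true →
      CircAltAux.WF r x = CircAltAux.WF r y → κ x < κ y →
      (c₀ (CircAltAux.baseF v₀ r x) : ℕ) ≤ (c₀ (CircAltAux.baseF v₀ r y) : ℕ) := by
    intro x y hwx hwy hWeq hκlt
    have h1 : CircAltAux.WF r x * T + CircAltAux.tieF f r x ≤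
        CircAltAux.WF r y * T + CircAltAux.tieF f r y :=
      CircAltAux.lex_le (hgC x) (hgC y) hκlt
    have h2 : CircAltAux.tieF f r x ≤ CircAltAux.tieF f r y := by
      rw [hWeq] at h1
      omega
    rw [CircAltAux.tie_word f v₀ r x hwx, CircAltAux.tie_word f v₀ r y hwy] at h2
    by_contra hgt
    push_neg at hgt
    have h3 : f (CircAltAux.baseF v₀ r y) < f (CircAltAux.baseF v₀ r x) :=
      CircAltAux.lex_lt (((Fintype.equivFin V) _).isLt) hgt
    omega
  have hκinj : Function.Injective κ := by
    intro x y hxy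
    have h1 := CircAltAux.lex_comp (hgC x) (hgC y) hxy
    exact (Fintype.equivFin (IterMycVert V r)).injective (Fin.ext h1.2)
  letI : LinearOrder (IterMycVert V r) := LinearOrder.lift' κ hκinj
  have hlt_iff : ∀ x y : IterMycVert V r, x < y ↔ κ x < κ y := by
    intro x y
    constructor
    · intro h
      have hle : κ x ≤ κ y := h.le
      have hne : x ≠ y := ne_of_lt h
      rcases lt_or_eq_of_le hle with h' | h'
      · exact h'
      · exact absurd (hκinj h') hne
    · intro h
      rcases lt_trichotomy x y with h' | h' | h'
      · exact h'
      · subst h'; omega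
      · have : κ y ≤ κ x := h'.le
        omega
  let e := monoEquivOfFin (IterMycVert V r) rfl
  let σ : IterMycVert V r ≃ Fin (Fintype.card (IterMycVert V r)) := e.symm.toEquiv
  have hσ : ∀ x y : IterMycVert V r, (σ x : ℕ) < (σ y : ℕ) ↔ κ x < κ y := by
    intro x y
    have h1 : σ x < σ y ↔ x < y := e.symm.lt_iff_lt
    exact Fin.lt_def.symm.trans (h1.trans (hlt_iff x y))
  -- now bound the circular altitude
  have hub : ∀ k ∈ {k | ∀ σ' : IterMycVert V r ≃ Fin (Fintype.card (IterMycVert V r)),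
      ∃ l : List (IterMycVert V r), IsMonotonicCycle (iterMycielskian G r) σ' l ∧ k ≤ l.length},
      k ≤ t - 1 := by
    intro k hk
    obtain ⟨l, ⟨hcyc, rot, hchain⟩, hkl⟩ := hk σ
    by_contra hgt
    push_neg at hgt
    have hkt : t ≤ k := by omega
    set l' := l.rotate rot with hl'def
    have hlen' : l'.length = l.length := List.length_rotate l rot
    have hlenl' : t ≤ l'.length := by omega
    have hadj' : ∀ i : Fin l'.length, (iterMycielskian G r).Adj (l'.get i)
        (l'.get ⟨((i : ℕ) + 1) % l'.length, Nat.mod_lt _ i.pos⟩) := by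
      intro i
      have hL0 : 0 < l.length := by omega
      have hg1 : l'.get i = l.get ⟨((i : ℕ) + rot) % l.length, Nat.mod_lt _ hL0⟩ := by
        rw [List.get_rotate]
      have hg2 : l'.get ⟨((i : ℕ) + 1) % l'.length, Nat.mod_lt _ i.pos⟩ =
          l.get ⟨((((i : ℕ) + 1) % l'.length) + rot) % l.length, Nat.mod_lt _ hL0⟩ := by
        rw [List.get_rotate]
      have key : ∀ iv : ℕ, (((iv + 1) % l'.length) + rot) % l.length =
          (((iv + rot) % l.length) + 1) % l.length := by
        intro iv
        rw [hlen', Nat.mod_add_mod, Nat.mod_add_mod]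
        congr 1
        omega
      have hidx : ((((i : ℕ) + 1) % l'.length) + rot) % l.length =
          ((((i : ℕ) + rot) % l.length) + 1) % l.length := key (i : ℕ)
      have h1 := hcyc.2.2 ⟨((i : ℕ) + rot) % l.length, Nat.mod_lt _ hL0⟩
      rw [hg1, hg2]
      have hg3 : (⟨((((i : ℕ) + 1) % l'.length) + rot) % l.length, Nat.mod_lt _ hL0⟩ :
          Fin l.length) = ⟨((((i : ℕ) + rot) % l.length) + 1) % l.length, Nat.mod_lt _ hL0⟩ :=
        Fin.ext hidx
      rw [hg3]
      exact h1
    have hsort' : ∀ (i : ℕ) (h : i + 1 < l'.length),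
        κ (l'.get ⟨i, by omega⟩) < κ (l'.get ⟨i + 1, h⟩) := by
      intro i hi
      have hmaplen : (l'.map fun x => (σ x : ℕ)).length = l'.length := List.length_map _
      have h1 := List.isChain_iff_getElem.1 hchain i (by omega)
      rw [List.getElem_map, List.getElem_map] at h1
      exact (hσ _ _).1 h1
    exact CircAltAux.core G v₀ s r t hs2 hst htodd hoddgirth c₀ hc₀ κ hκWlt hκtie
      l' hlenl' hadj' hsort'
  have hSne : ({k | ∀ σ' : IterMycVert V r ≃ Fin (Fintype.card (IterMycVert V r)),
      ∃ l : List (IterMycVert V r), IsMonotonicCycle (iterMycielskian G r) σ' l ∧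
      k ≤ l.length} : Set ℕ).Nonempty := by
    refine ⟨0, fun σ' => ?_⟩
    obtain ⟨x, y, hxy⟩ := CircAltAux.iter_edge G ⟨v₀, b₀, hab₀⟩ r
    have hne : (σ' x : ℕ) ≠ (σ' y : ℕ) := by
      intro h
      exact hxy.ne (σ'.injective (Fin.ext h))
    rcases Nat.lt_or_ge (σ' x : ℕ) (σ' y : ℕ) with h | h
    · exact ⟨[x, y], CircAltAux.edge_cycle _ σ' hxy h, by simp⟩
    · exact ⟨[y, x], CircAltAux.edge_cycle _ σ' hxy.symm (by omega), by simp⟩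
  have hfinal : circAltitude (iterMycielskian G r) ≤ t - 1 := csSup_le hSne hub
  have ht2 : 2 ≤ t := by omega
  omega
end

section
/- For every finite simple graph G with at least one edge, α∘(G) ≤ χ_c(G); equivalently, since α∘(G) is an integer, α∘(G) ≤ ⌊χ_c(G)⌋. Concretely: if G admits a (p,q)-colouring for positive integers p, q, then α∘(G) ≤ p/q. -/
open SimpleGraph

lemma IsCycleList.rotate' {V : Type*} {G : SimpleGraph V} {l : List V}
    (h : IsCycleList G l) (r : ℕ) : IsCycleList G (l.rotate r) := by
  obtain ⟨h2, hnd, hadj⟩ := h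
  refine ⟨by simpa using h2, List.nodup_rotate.2 hnd, ?_⟩
  intro i
  have hlen : (l.rotate r).length = l.length := List.length_rotate l r
  have hpos : 0 < l.length := by omega
  have e1 : ∀ a : ℕ, ((a + 1) % (l.rotate r).length + r) % l.length
      = ((a + r) % l.length + 1) % l.length := by
    intro a
    rw [hlen, Nat.mod_add_mod, Nat.mod_add_mod, Nat.add_right_comm]
  have key := hadj ⟨((i : ℕ) + r) % l.length, Nat.mod_lt _ hpos⟩
  rw [List.get_rotate, List.get_rotate]
  convert key using 2
  exact Fin.ext (e1 i)

/-- A `(p,q)`-colouring of `G`: a map `c : V(G) → {1, …, p}` (encoded as `Fin p`) such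
that `q ≤ |c u − c v| ≤ p − q` for every edge `uv` of `G`. -/
def IsPQColoring {V : Type*} (G : SimpleGraph V) (p q : ℕ) (c : V → Fin p) : Prop :=
  ∀ a b : V, G.Adj a b →
    (q : ℤ) ≤ |((c a : ℕ) : ℤ) - ((c b : ℕ) : ℤ)| ∧
      |((c a : ℕ) : ℤ) - ((c b : ℕ) : ℤ)| ≤ (p : ℤ) - (q : ℤ)

/-- The circular chromatic number `χ_c(G)`: the infimum of `p / q` over all pairs of
positive integers `(p, q)` for which `G` admits a `(p,q)`-colouring. -/
noncomputable def circChromNum {V : Type*} [Fintype V] (G : SimpleGraph V) : ℝ :=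
  sInf {x : ℝ | ∃ p q : ℕ, 0 < p ∧ 0 < q ∧ x = (p : ℝ) / (q : ℝ) ∧
    ∃ c : V → Fin p, IsPQColoring G p q c}

lemma chain_bound {V : Type*} [Fintype V] {G : SimpleGraph V} {p q : ℕ}
    {c : V → Fin p} (hc : IsPQColoring G p q c)
    {σ : V ≃ Fin (Fintype.card V)}
    (hσ : ∀ x y : V, (σ x : ℕ) < (σ y : ℕ) → ((c x : ℕ) : ℤ) ≤ ((c y : ℕ) : ℤ))
    {m : List V} (hcyc : IsCycleList G m)
    (hchain : (m.map fun x => (σ x : ℕ)).Chain' (· < ·)) : m.length * q ≤ p := by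
  obtain ⟨h2, hnd, hadj⟩ := hcyc
  -- colors strictly ordered along m
  have hmono : ∀ j (hj : j + 1 < m.length),
      (σ (m.get ⟨j, by omega⟩) : ℕ) < (σ (m.get ⟨j+1, hj⟩) : ℕ) := by
    intro j hj
    have hlm : j < (m.map fun x => (σ x : ℕ)).length - 1 := by
      rw [List.length_map]; omega
    have := List.isChain_iff_getElem.1 hchain j (by simp at hlm ⊢; omega)
    simpa using this
  -- each forward step gains at least q
  have hstep : ∀ j (hj : j + 1 < m.length),
      (q : ℤ) + ((c (m.get ⟨j, by omega⟩) : ℕ) : ℤ) ≤ ((c (m.get ⟨j+1, hj⟩) : ℕ) : ℤ) := by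
    intro j hj
    have hadj' := hadj ⟨j, by omega⟩
    have hmod : (j + 1) % m.length = j + 1 := Nat.mod_eq_of_lt hj
    have hadj2 : G.Adj (m.get ⟨j, by omega⟩) (m.get ⟨j+1, hj⟩) := by
      convert hadj' using 2
      exact Fin.ext hmod.symm
    have h1 := (hc _ _ hadj2.symm).1
    have h2' := hσ _ _ (hmono j hj)
    rw [abs_of_nonneg (by omega)] at h1
    omega
  -- telescoping
  have htel : ∀ j (hj : j < m.length),
      (j : ℤ) * q + ((c (m.get ⟨0, by omega⟩) : ℕ) : ℤ) ≤ ((c (m.get ⟨j, hj⟩) : ℕ) : ℤ) := by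
    intro j
    induction j with
    | zero => intro hj; simp
    | succ n ih =>
      intro hj
      have h1 := ih (by omega)
      have h2' := hstep n hj
      push_cast
      push_cast at h1 h2'
      linarith
  -- wrap-around edge
  have hlast := htel (m.length - 1) (by omega)
  have hadjw := hadj ⟨m.length - 1, by omega⟩
  have hmod : (m.length - 1 + 1) % m.length = 0 := by
    have h : m.length - 1 + 1 = m.length := by omega
    simp [h]
  have hadjw' : G.Adj (m.get ⟨m.length - 1, by omega⟩) (m.get ⟨0, by omega⟩) := by
    convert hadjw using 2
    exact Fin.ext hmod.symm
  have hw := (hc _ _ hadjw').2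
  have habs : ((c (m.get ⟨m.length - 1, by omega⟩) : ℕ) : ℤ)
      - ((c (m.get ⟨0, by omega⟩) : ℕ) : ℤ) ≤ (p : ℤ) - q :=
    le_trans (le_abs_self _) hw
  have hAq : ((m.length - 1 : ℕ) : ℤ) * q ≤ (p : ℤ) - q := by linarith [hlast, habs]
  have hA1 : (m.length : ℤ) = ((m.length - 1 : ℕ) : ℤ) + 1 := by omega
  have hk' : (m.length : ℤ) * q ≤ p := by
    calc (m.length : ℤ) * q = ((m.length - 1 : ℕ) : ℤ) * q + q := by rw [hA1]; ring
    _ ≤ p := by linarith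
  exact_mod_cast hk'

lemma cycle_len_bound {V : Type*} [Fintype V] {G : SimpleGraph V} {p q : ℕ}
    {c : V → Fin p} (hc : IsPQColoring G p q c)
    {σ : V ≃ Fin (Fintype.card V)}
    (hσ : ∀ x y : V, (σ x : ℕ) < (σ y : ℕ) → ((c x : ℕ) : ℤ) ≤ ((c y : ℕ) : ℤ))
    {l : List V} (hl : IsMonotonicCycle G σ l) : l.length * q ≤ p := by
  obtain ⟨hcyc, r, hchain⟩ := hl
  have := chain_bound hc hσ (hcyc.rotate' r) hchain
  rwa [List.length_rotate] at this

lemma exists_sorted_equiv {V : Type*} [Fintype V] {p : ℕ} (c : V → Fin p) :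
    ∃ σ : V ≃ Fin (Fintype.card V),
      ∀ x y : V, (σ x : ℕ) < (σ y : ℕ) → ((c x : ℕ) : ℤ) ≤ ((c y : ℕ) : ℤ) := by
  classical
  set n := Fintype.card V with hn
  let e : V ≃ Fin n := Fintype.equivFin V
  let f : V → ℕ := fun v => (c v : ℕ) * n + (e v : ℕ)
  have key : ∀ x y : V, (c x : ℕ) < (c y : ℕ) → f x < f y := by
    intro x y hxy
    have hx := (e x).2
    calc f x < (c x : ℕ) * n + n := by simp only [f]; omega
    _ = ((c x : ℕ) + 1) * n := by ring
    _ ≤ (c y : ℕ) * n := Nat.mul_le_mul_right n hxy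
    _ ≤ f y := Nat.le_add_right _ _
  have hinj : Function.Injective f := by
    intro x y h
    rcases lt_trichotomy ((c x : ℕ)) ((c y : ℕ)) with h1 | h1 | h1
    · exact absurd h (key x y h1).ne
    · have hmul : (c x : ℕ) * n = (c y : ℕ) * n := by rw [h1]
      have hev : (e x : ℕ) = (e y : ℕ) := by simp only [f] at h; omega
      exact e.injective (Fin.ext hev)
    · exact absurd h.symm (key y x h1).ne
  letI : LinearOrder V := LinearOrder.lift' f hinj
  have hle : ∀ x y : V, x ≤ y ↔ f x ≤ f y := fun x y => Iff.rfl
  let g : Fin n ≃o V := monoEquivOfFin V hn.symm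
  refine ⟨g.symm.toEquiv, ?_⟩
  intro x y hxy
  have h1 : g.symm x < g.symm y := by
    rwa [Fin.lt_def]
  have h2 : x < y := g.symm.lt_iff_lt.1 h1
  have h3 : f x < f y := by
    rcases lt_or_ge (f x) (f y) with h | h
    · exact h
    · exact absurd ((hle y x).2 h) (not_le.2 h2)
  by_contra hcon
  push_neg at hcon
  have : (c y : ℕ) < (c x : ℕ) := by exact_mod_cast hcon
  exact absurd h3 (not_lt.2 (key y x this).le)

lemma zero_mem_alt {V : Type*} [Fintype V] {G : SimpleGraph V}
    (hedge : ∃ a b : V, G.Adj a b) (σ : V ≃ Fin (Fintype.card V)) :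
    ∃ l : List V, IsMonotonicCycle G σ l ∧ 0 ≤ l.length := by
  obtain ⟨a, b, hab⟩ := hedge
  have hcyc : ∀ x y : V, G.Adj x y → IsCycleList G [x, y] := by
    intro x y hxy
    refine ⟨by simp, by simp [hxy.ne], ?_⟩
    intro i
    fin_cases i <;> simp [hxy, hxy.symm]
  rcases lt_or_gt_of_ne (fun h => hab.ne (σ.injective (Fin.ext h)) :
      (σ a : ℕ) ≠ (σ b : ℕ)) with h | h
  · exact ⟨[a, b], ⟨hcyc a b hab, 0, by simpa [List.Chain'] using h⟩, by simp⟩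
  · exact ⟨[b, a], ⟨hcyc b a hab.symm, 0, by simpa [List.Chain'] using h⟩, by simp⟩

/-- For every finite simple graph `G` with at least one edge, `α∘(G) ≤ χ_c(G)`.
Concretely: if `G` admits a `(p,q)`-colouring for positive integers `p, q`, then
`α∘(G) ≤ p / q`. -/
theorem circAltitude_le_circChromNum {V : Type*} [Fintype V]
    (G : SimpleGraph V) (hedge : ∃ a b : V, G.Adj a b) :
    (circAltitude G : ℝ) ≤ circChromNum G ∧
      ∀ p q : ℕ, 0 < p → 0 < q → ∀ c : V → Fin p, IsPQColoring G p q c →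
        (circAltitude G : ℝ) ≤ (p : ℝ) / (q : ℝ) := by
  have part2 : ∀ p q : ℕ, 0 < p → 0 < q → ∀ c : V → Fin p, IsPQColoring G p q c →
      (circAltitude G : ℝ) ≤ (p : ℝ) / (q : ℝ) := by
    intro p q hp hq c hc
    obtain ⟨σ, hσ⟩ := exists_sorted_equiv c
    have hnat : circAltitude G ≤ p / q := by
      unfold circAltitude
      refine csSup_le ⟨0, ?_⟩ ?_
      · exact fun τ => zero_mem_alt hedge τ
      intro k hk
      obtain ⟨l, hml, hkl⟩ := hk σ
      have hbound := cycle_len_bound hc hσ hml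
      exact (Nat.le_div_iff_mul_le hq).2 (le_trans (Nat.mul_le_mul_right q hkl) hbound)
    calc (circAltitude G : ℝ) ≤ ((p / q : ℕ) : ℝ) := by exact_mod_cast hnat
    _ ≤ (p : ℝ) / (q : ℝ) := Nat.cast_div_le
  refine ⟨?_, part2⟩
  apply le_csInf
  · have hne : Nonempty V := ⟨hedge.choose⟩
    have hn : 0 < Fintype.card V := Fintype.card_pos
    let e : V ≃ Fin (Fintype.card V) := Fintype.equivFin V
    refine ⟨((Fintype.card V : ℝ)) / ((1 : ℕ) : ℝ), Fintype.card V, 1, hn, one_pos, rfl,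
      fun v => e v, ?_⟩
    intro a b hab
    have hne2 : (e a : ℕ) ≠ (e b : ℕ) := fun h => hab.ne (e.injective (Fin.ext h))
    have ha := (e a).2
    have hb := (e b).2
    constructor
    · rcases abs_cases (((e a : ℕ) : ℤ) - ((e b : ℕ) : ℤ)) with ⟨h1, _⟩ | ⟨h1, _⟩ <;>
        rw [h1] <;> omega
    · rcases abs_cases (((e a : ℕ) : ℤ) - ((e b : ℕ) : ℤ)) with ⟨h1, _⟩ | ⟨h1, _⟩ <;>
        rw [h1] <;> omega
  · rintro x ⟨p, q, hp, hq, rfl, c, hc⟩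
    exact part2 p q hp hq c hc
end

section
/- Let G be a finite simple graph, r ≥ 1, and fix a powerful ordering of M^r(G) with respect to a proper χ(G)-colouring c of G. Let i, j ∈ V(G) with i adjacent to j in G, and suppose i^{W1} is adjacent to j^{W2} in M^r(G) for words W1, W2 of length r in u, v, where j^{W2} comes after i^{W1} in the powerful ordering. If W1 has the letter u in position s (reading right to left) with s > 1, then there is an integer k with 1 ≤ k < s such that W1 has the letter v in position k and W2 has the letter u in position k. -/
open SimpleGraph

/-- A powerful ordering of `M^r(G)` with respect to a proper colouring `c` of `G` by the
colours `{1, …, d}` (encoded as `Fin d`):  a linear ordering of the vertices of `M^r(G)`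
(encoded as a bijection `σ` with `Fin (card (IterMycVert V r))`, `x` preceding `y` iff
`σ x < σ y`) such that
(P1) for `i, j ∈ V(G)` and a fixed word `W` of length `r`, if `i^W` precedes `j^W` then
`c i ≤ c j`;
(P2) for words `W₁ < W₂` of length `r` in the lexicographic order (right to left,
`v < u`) and any `i, j ∈ V(G)`, `i^{W₁}` precedes `j^{W₂}`;
(P3) every vertex of the form `w_k^U` (`U` of length `r - k`) precedes every vertex of
the form `j^W` with `j ∈ V(G)` and `W` of length `r`;
(P4) for `k < l`, every vertex of the form `w_k^U` precedes every vertex of the form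
`w_l^{U'}`. -/
structure IsPowerfulOrdering {V : Type u} [Fintype V] (G : SimpleGraph V) (r : ℕ)
    (d : ℕ) (c : V → Fin d)
    (σ : IterMycVert V r ≃ Fin (Fintype.card (IterMycVert V r))) : Prop where
  p1 : ∀ (W : MycWord r) (i j : V),
    σ (wordVert W i) < σ (wordVert W j) → c i ≤ c j
  p2 : ∀ W₁ W₂ : MycWord r, wordLT W₁ W₂ → ∀ i j : V,
    σ (wordVert W₁ i) < σ (wordVert W₂ j)
  p3 : ∀ (k : ℕ) (hk1 : 1 ≤ k) (hk2 : k ≤ r) (U : MycWord (r - k)) (j : V)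
    (W : MycWord r), σ (wVert k hk1 hk2 U) < σ (wordVert W j)
  p4 : ∀ (k l : ℕ) (hk1 : 1 ≤ k) (hk2 : k ≤ r) (hl1 : 1 ≤ l) (hl2 : l ≤ r), k < l →
    ∀ (U : MycWord (r - k)) (U' : MycWord (r - l)),
      σ (wVert k hk1 hk2 U) < σ (wVert l hl1 hl2 U')

/-- A monotonic path for a linear ordering `σ` of the vertices of `H`: a path of `H`
whose vertices appear in increasing order in the ordering.  The length of a path is its
number of vertices. -/
def IsMonoPath {A : Type u} [Fintype A] (H : SimpleGraph A)
    (σ : A ≃ Fin (Fintype.card A)) (l : List A) : Prop :=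
  l.Chain' H.Adj ∧ (l.map fun x => σ x).Chain' (· < ·)

lemma adj_wordVert_not_both {V : Type u} (G : SimpleGraph V) :
    ∀ {r : ℕ} (W₁ W₂ : MycWord r) (i j : V),
      (iterMycielskian G r).Adj (wordVert W₁ i) (wordVert W₂ j) →
      ∀ t : Fin r, ¬(W₁ t = true ∧ W₂ t = true) := by
  intro r
  induction r with
  | zero => intro W₁ W₂ i j _ t; exact t.elim0
  | succ r ih =>
    intro W₁ W₂ i j hadj t
    rintro ⟨h1, h2⟩
    have hadj' : (iterMycielskian G r).Adj
        (wordVert (fun k => W₁ k.castSucc) i) (wordVert (fun k => W₂ k.castSucc) j) := by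
      unfold wordVert at hadj
      cases hb1 : W₁ (Fin.last r) <;> cases hb2 : W₂ (Fin.last r) <;>
          simp only [hb1, hb2, reduceIte, Bool.false_eq_true] at hadj <;>
        first
          | exact hadj
          | exact (hadj : False).elim
    -- handle t = last or t = castSucc
    rcases eq_or_ne t (Fin.last r) with rfl | hne
    · unfold wordVert at hadj
      simp [h1, h2] at hadj
      exact hadj
    · obtain ⟨k, rfl⟩ := Fin.exists_castSucc_eq.mpr hne
      exact ih (fun k => W₁ k.castSucc) (fun k => W₂ k.castSucc) i j hadj' k ⟨h1, h2⟩

/-- Fix a powerful ordering `σ` of `M^r(G)` with respect to a proper `χ(G)`-colouring `c`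
of `G`.  Let `i, j ∈ V(G)` with `i` adjacent to `j` in `G`, and suppose `i^{W₁}` is
adjacent to `j^{W₂}` in `M^r(G)` for words `W₁, W₂` of length `r` in `u, v`, where
`j^{W₂}` comes after `i^{W₁}` in the ordering.  If `W₁` has the letter `u` in a position
`s` (reading right to left, 0-indexed) with `s > 1` (i.e. index `s ≥ 1`), then there is a
position `k < s` such that `W₁` has the letter `v` in position `k` and `W₂` has the
letter `u` in position `k`. -/
theorem exists_v_u_position {V : Type*} [Fintype V] (G : SimpleGraph V)
    (r : ℕ) (hr : 1 ≤ r) (d : ℕ) (hd : G.chromaticNumber = (d : ℕ∞))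
    (c : V → Fin d) (hc : ∀ a b : V, G.Adj a b → c a ≠ c b)
    (σ : IterMycVert V r ≃ Fin (Fintype.card (IterMycVert V r)))
    (hσ : IsPowerfulOrdering G r d c σ)
    (i j : V) (hij : G.Adj i j) (W₁ W₂ : MycWord r)
    (hadj : (iterMycielskian G r).Adj (wordVert W₁ i) (wordVert W₂ j))
    (horder : σ (wordVert W₁ i) < σ (wordVert W₂ j))
    (s : Fin r) (hs : 1 ≤ (s : ℕ)) (hu : W₁ s = true) :
    ∃ k : Fin r, k < s ∧ W₁ k = false ∧ W₂ k = true := by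
  have hboth := adj_wordVert_not_both G W₁ W₂ i j hadj
  have hW2s : W₂ s = false := by
    have := hboth s
    cases hb : W₂ s
    · rfl
    · exact absurd ⟨hu, hb⟩ this
  by_contra hcon
  push_neg at hcon
  -- minimal disagreement position ≤ s
  classical
  have hne : (Finset.univ.filter (fun m : Fin r => m ≤ s ∧ W₁ m ≠ W₂ m)).Nonempty := by
    refine ⟨s, ?_⟩
    simp [hu, hW2s]
  set F := Finset.univ.filter (fun m : Fin r => m ≤ s ∧ W₁ m ≠ W₂ m) with hF
  obtain ⟨hms, hmne⟩ : F.min' hne ≤ s ∧ W₁ (F.min' hne) ≠ W₂ (F.min' hne) := by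
    have := Finset.min'_mem F hne
    simpa [hF] using this
  set m := F.min' hne with hm
  have hagree : ∀ k : Fin r, k < m → W₂ k = W₁ k := by
    intro k hk
    by_contra hne'
    have hkF : k ∈ F := by
      simp only [hF, Finset.mem_filter, Finset.mem_univ, true_and]
      exact ⟨le_of_lt (lt_of_lt_of_le hk hms), fun h => hne' h.symm⟩
    exact absurd (Finset.min'_le F k hkF) (not_le.mpr hk)
  cases hb : W₁ m
  · -- W₁ m = false, so W₂ m = true, and m < s; contradiction with hcon
    have hb2 : W₂ m = true := by
      cases hb2 : W₂ m
      · exact absurd (hb.trans hb2.symm) hmne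
      · rfl
    have hms' : m < s := by
      rcases lt_or_eq_of_le hms with h | h
      · exact h
      · exact absurd (h ▸ hb) (by simp [hu])
    exact absurd hb2 (hcon m hms' hb)
  · -- W₁ m = true, W₂ m = false: wordLT W₂ W₁, contradiction with horder
    have hb2 : W₂ m = false := by
      cases hb2 : W₂ m
      · rfl
      · exact absurd (hb.trans hb2.symm) hmne
    have hlt : wordLT W₂ W₁ := ⟨m, hb2, hb, hagree⟩
    exact absurd (hσ.p2 W₂ W₁ hlt j i) (not_lt.mpr (le_of_lt horder))
end
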